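/- arXiv:1807.04163 — 9 statements merged into one kernel-verified Lean document; each statement's English description precedes it below -/
import Mathlib

section
/- Theorem 3.4 (existence content, fixed total rent with nonnegative utilities): Let ε > 0 and C ∈ ℝ, and let the rent-division instance satisfy the standing assumptions. Suppose z : Fin n → Fin n → ℝ satisfies v a r (z a r) = 0 for all agents a and rooms r, and ∑_{r} z a r ≥ C for every agent a. Then there exist a permutation π and a price vector p : Fin n → ℝ such that (π, p) is an ε-envy-free solution, ∑_{r} p r = C, and v a (π a) (p (π a)) ≥ 0 for every agent a. -/
set_option linter.unusedSectionVars false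
set_option maxHeartbeats 1000000

/-- A function `f : ℝ → ℝ` is piecewise linear: there are finitely many
breakpoints `b 0 < … < b t` such that `f` is affine on `(-∞, b 0]`, on each
`[b i, b (i+1)]`, and on `[b t, ∞)`. -/
def PiecewiseLinear (f : ℝ → ℝ) : Prop :=
  ∃ (t : ℕ) (b : Fin (t + 1) → ℝ), StrictMono b ∧
    (∃ m c : ℝ, ∀ x ≤ b 0, f x = m * x + c) ∧
    (∀ i : Fin t, ∃ m c : ℝ,
      ∀ x ∈ Set.Icc (b i.castSucc) (b i.succ), f x = m * x + c) ∧
    (∃ m c : ℝ, ∀ x, b (Fin.last t) ≤ x → f x = m * x + c)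

/-- A solution `(π, p)` is `ε`-envy-free. -/
def EpsEF (n : ℕ) (ε : ℝ) (v : Fin n → Fin n → ℝ → ℝ)
    (π : Equiv.Perm (Fin n)) (p : Fin n → ℝ) : Prop :=
  ∀ a : Fin n,
    (0 ≤ v a (π a) (p (π a)) →
      ∀ r, v a r (p r) ≤ (1 + ε) * v a (π a) (p (π a))) ∧
    (v a (π a) (p (π a)) < 0 →
      ∀ r, (1 + ε) * v a r (p r) ≤ v a (π a) (p (π a)))

section Prelims

lemma antitone_glue (t : ℕ) (b : Fin (t + 1) → ℝ) (hb : StrictMono b) (g : ℝ → ℝ)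
    (h1 : AntitoneOn g (Set.Iic (b 0)))
    (h2 : ∀ i : Fin t, AntitoneOn g (Set.Icc (b i.castSucc) (b i.succ)))
    (h3 : AntitoneOn g (Set.Ici (b (Fin.last t)))) : Antitone g := by
  have key : ∀ k : ℕ, ∀ hk : k ≤ t, AntitoneOn g (Set.Iic (b ⟨k, Nat.lt_succ_of_le hk⟩)) := by
    intro k
    induction k with
    | zero =>
      intro _
      have : (⟨0, Nat.lt_succ_of_le (Nat.zero_le t)⟩ : Fin (t+1)) = 0 := rfl
      rw [this]; exact h1
    | succ m ih =>
      intro hk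
      have hm : m ≤ t := Nat.le_of_succ_le hk
      have ihm := ih hm
      have hmt : m < t := hk
      have hpiece := h2 ⟨m, hmt⟩
      have hcs : (Fin.castSucc ⟨m, hmt⟩ : Fin (t+1)) = ⟨m, Nat.lt_succ_of_le hm⟩ := rfl
      have hsc : (Fin.succ ⟨m, hmt⟩ : Fin (t+1)) = ⟨m+1, Nat.lt_succ_of_le hk⟩ := rfl
      rw [hcs, hsc] at hpiece
      intro x hx y hy hxy
      simp only [Set.mem_Iic] at hx hy
      set c := b ⟨m, Nat.lt_succ_of_le hm⟩ with hcdef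
      set d := b ⟨m+1, Nat.lt_succ_of_le hk⟩ with hddef
      have hcd : c ≤ d := le_of_lt (hb (by exact Fin.mk_lt_mk.mpr (Nat.lt_succ_self m)))
      by_cases hyc : y ≤ c
      · exact ihm (Set.mem_Iic.mpr (le_trans hxy hyc)) (Set.mem_Iic.mpr hyc) hxy
      · push_neg at hyc
        by_cases hxc : x ≤ c
        · have g1 : g c ≤ g x := ihm (Set.mem_Iic.mpr hxc) (Set.mem_Iic.mpr le_rfl) hxc
          have g2 : g y ≤ g c :=
            hpiece (Set.mem_Icc.mpr ⟨le_rfl, hcd⟩) (Set.mem_Icc.mpr ⟨le_of_lt hyc, hy⟩)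
              (le_of_lt hyc)
          exact le_trans g2 g1
        · push_neg at hxc
          exact hpiece (Set.mem_Icc.mpr ⟨le_of_lt hxc, le_trans hxy hy⟩)
            (Set.mem_Icc.mpr ⟨le_trans (le_of_lt hxc) hxy, hy⟩) hxy
  intro x y hxy
  have hlast : (Fin.last t) = (⟨t, Nat.lt_succ_of_le le_rfl⟩ : Fin (t+1)) := rfl
  set e := b (Fin.last t) with he
  have keyt : AntitoneOn g (Set.Iic e) := by rw [he, hlast]; exact key t le_rfl
  by_cases hye : y ≤ e
  · exact keyt (Set.mem_Iic.mpr (le_trans hxy hye)) (Set.mem_Iic.mpr hye) hxy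
  · push_neg at hye
    by_cases hxe : x ≤ e
    · have g1 : g e ≤ g x := keyt (Set.mem_Iic.mpr hxe) (Set.mem_Iic.mpr le_rfl) hxe
      have g2 : g y ≤ g e :=
        h3 (Set.mem_Ici.mpr le_rfl) (Set.mem_Ici.mpr (le_of_lt hye)) (le_of_lt hye)
      exact le_trans g2 g1
    · push_neg at hxe
      exact h3 (Set.mem_Ici.mpr (le_of_lt hxe))
        (Set.mem_Ici.mpr (le_trans (le_of_lt hxe) hxy)) hxy

lemma affine_antitoneOn {f : ℝ → ℝ} {m c l : ℝ} {s : Set ℝ}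
    (hf : ∀ x ∈ s, f x = m * x + c) (h : m + l ≤ 0) :
    AntitoneOn (fun x => f x + l * x) s := by
  intro x hx y hy hxy
  simp only [hf x hx, hf y hy]
  nlinarith

lemma pl_bilip (f : ℝ → ℝ) (hpl : PiecewiseLinear f) (hanti : StrictAnti f) :
    ∃ l L : ℝ, 0 < l ∧ l ≤ L ∧
      ∀ x y : ℝ, x ≤ y → l * (y - x) ≤ f x - f y ∧ f x - f y ≤ L * (y - x) := by
  obtain ⟨t, b, hb, ⟨m0, c0, h0⟩, hmid, ⟨m1, c1, h1⟩⟩ := hpl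
  choose m c hmc using hmid
  classical
  set S : Finset ℝ := insert (-m0) (insert (-m1) (Finset.image (fun i => -(m i)) Finset.univ))
    with hS
  have hSne : S.Nonempty := ⟨-m0, by simp [hS]⟩
  set l := S.min' hSne with hl
  set L := S.max' hSne with hLdef
  have hmem_pos : ∀ s ∈ S, 0 < s := by
    intro s hs
    simp only [hS, Finset.mem_insert, Finset.mem_image, Finset.mem_univ, true_and] at hs
    rcases hs with rfl | rfl | ⟨i, rfl⟩
    · have hx : b 0 - 1 ≤ b 0 := by linarith
      have := hanti (show b 0 - (1:ℝ) < b 0 by linarith)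
      rw [h0 _ hx, h0 _ le_rfl] at this
      nlinarith
    · have hx : b (Fin.last t) ≤ b (Fin.last t) + 1 := by linarith
      have := hanti (show b (Fin.last t) < b (Fin.last t) + 1 by linarith)
      rw [h1 _ le_rfl, h1 _ hx] at this
      nlinarith
    · have hlt : (i.castSucc : Fin (t+1)) < i.succ := Fin.castSucc_lt_succ
      have hblt : b i.castSucc < b i.succ := hb hlt
      have hxm : b i.castSucc ∈ Set.Icc (b i.castSucc) (b i.succ) :=
        Set.mem_Icc.mpr ⟨le_rfl, le_of_lt hblt⟩
      have hym : b i.succ ∈ Set.Icc (b i.castSucc) (b i.succ) :=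
        Set.mem_Icc.mpr ⟨le_of_lt hblt, le_rfl⟩
      have := hanti hblt
      rw [hmc i _ hxm, hmc i _ hym] at this
      nlinarith
  have hlpos : 0 < l := hmem_pos _ (S.min'_mem hSne)
  have hlL : l ≤ L := S.min'_le _ (S.max'_mem hSne)
  refine ⟨l, L, hlpos, hlL, ?_⟩
  have hlo : Antitone (fun x => f x + l * x) := by
    apply antitone_glue t b hb
    · exact affine_antitoneOn (fun x hx => h0 x hx)
        (by have := S.min'_le (-m0) (by simp [hS]); linarith)
    · intro i
      exact affine_antitoneOn (hmc i)
        (by have := S.min'_le (-(m i)) (by simp [hS]); linarith)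
    · exact affine_antitoneOn (fun x hx => h1 x hx)
        (by have := S.min'_le (-m1) (by simp [hS]); linarith)
  have hhi : Antitone (fun x => (-(f x)) + (-L) * x) := by
    have neg_aff : ∀ (mm cc : ℝ) (s : Set ℝ), (∀ x ∈ s, f x = mm * x + cc) →
        (-mm) + (-L) ≤ 0 → AntitoneOn (fun x => (-(f x)) + (-L) * x) s := by
      intro mm cc s hf hcond
      intro x hx y hy hxy
      simp only [hf x hx, hf y hy]
      nlinarith
    apply antitone_glue t b hb
    · exact neg_aff m0 c0 _ (fun x hx => h0 x hx)
        (by have := S.le_max' (-m0) (by simp [hS]); linarith)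
    · intro i
      exact neg_aff (m i) (c i) _ (hmc i)
        (by have := S.le_max' (-(m i)) (by simp [hS]); linarith)
    · exact neg_aff m1 c1 _ (fun x hx => h1 x hx)
        (by have := S.le_max' (-m1) (by simp [hS]); linarith)
  intro x y hxy
  constructor
  · have := hlo hxy
    simp only at this
    nlinarith
  · have := hhi hxy
    simp only at this
    nlinarith

end Prelims
lemma exists_rotation {n : ℕ} (cov : Fin n → Fin n) (hcov : ∀ r, cov r ≠ r) (hn : 0 < n) :
    ∃ σ : Equiv.Perm (Fin n), (∀ x, σ x = cov x ∨ σ x = x) ∧ ∃ x, σ x ≠ x := by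
  classical
  haveI : NeZero n := ⟨hn.ne'⟩
  obtain ⟨i, j, hij, hequ⟩ :
      ∃ i j : Fin (n+1), i ≠ j ∧ cov^[i.val] (⟨0, hn⟩ : Fin n) = cov^[j.val] (⟨0, hn⟩ : Fin n) := by
    have hcard : Fintype.card (Fin n) < Fintype.card (Fin (n+1)) := by simp
    obtain ⟨i, j, hne, h⟩ := Fintype.exists_ne_map_eq_of_card_lt
      (fun i : Fin (n+1) => cov^[i.val] (⟨0, hn⟩ : Fin n)) hcard
    exact ⟨i, j, hne, h⟩
  wlog hlt : i < j generalizing i j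
  · exact this j i hij.symm hequ.symm (hij.lt_or_gt.resolve_left hlt)
  set x0 : Fin n := ⟨0, hn⟩
  set y : Fin n := cov^[i.val] x0 with hy
  have hper : Function.IsPeriodicPt cov (j.val - i.val) y := by
    unfold Function.IsPeriodicPt Function.IsFixedPt
    rw [hy, ← Function.iterate_add_apply]
    rw [Nat.sub_add_cancel (le_of_lt hlt)]
    exact hequ.symm
  have hsubpos : 0 < j.val - i.val := Nat.sub_pos_of_lt hlt
  have hyper : y ∈ Function.periodicPts cov := Function.mk_mem_periodicPts hsubpos hper
  set m := Function.minimalPeriod cov y with hm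
  have hmpos : 0 < m := Function.minimalPeriod_pos_of_mem_periodicPts hyper
  set O : Set (Fin n) := Set.range (fun k : ℕ => cov^[k] y) with hO
  have hyO : y ∈ O := ⟨0, rfl⟩
  have hcovO : ∀ x ∈ O, cov x ∈ O := by
    rintro x ⟨k, rfl⟩
    exact ⟨k+1, by simp only [Function.iterate_succ_apply']⟩
  have hinjO : ∀ x1 ∈ O, ∀ x2 ∈ O, cov x1 = cov x2 → x1 = x2 := by
    rintro x1 ⟨k1, rfl⟩ x2 ⟨k2, rfl⟩ hc
    simp only at hc ⊢
    have e1 : cov^[k1] y = cov^[k1 % m] y := (Function.iterate_mod_minimalPeriod_eq).symm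
    have e2 : cov^[k2] y = cov^[k2 % m] y := (Function.iterate_mod_minimalPeriod_eq).symm
    rw [e1, e2] at hc ⊢
    rw [← Function.iterate_succ_apply' cov (k1 % m) y,
        ← Function.iterate_succ_apply' cov (k2 % m) y] at hc
    have hc' : cov^[(k1 % m + 1) % m] y = cov^[(k2 % m + 1) % m] y := by
      rw [Function.iterate_mod_minimalPeriod_eq, Function.iterate_mod_minimalPeriod_eq]
      exact hc
    have hmod : (k1 % m + 1) % m = (k2 % m + 1) % m :=
      Function.iterate_injOn_Iio_minimalPeriod
        (Set.mem_Iio.mpr (Nat.mod_lt _ hmpos)) (Set.mem_Iio.mpr (Nat.mod_lt _ hmpos)) hc'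
    have hmm : k1 % m = k2 % m := by
      have hcan : k1 % m ≡ k2 % m [MOD m] :=
        Nat.ModEq.add_right_cancel (Nat.ModEq.refl 1) (hmod : (k1 % m + 1) ≡ (k2 % m + 1) [MOD m])
      have h1 : k1 % m % m = k1 % m := Nat.mod_eq_of_lt (Nat.mod_lt _ hmpos)
      have h2 : k2 % m % m = k2 % m := Nat.mod_eq_of_lt (Nat.mod_lt _ hmpos)
      rw [Nat.ModEq] at hcan
      rw [h1, h2] at hcan
      exact hcan
    rw [hmm]
  -- define the rotation
  set s : Fin n → Fin n := fun x => if x ∈ O then cov x else x with hs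
  have hsinj : Function.Injective s := by
    intro x1 x2 h12
    by_cases h1 : x1 ∈ O <;> by_cases h2 : x2 ∈ O
    · rw [hs] at h12; simp only [if_pos h1, if_pos h2] at h12
      exact hinjO x1 h1 x2 h2 h12
    · exfalso
      rw [hs] at h12; simp only [if_pos h1, if_neg h2] at h12
      exact h2 (h12 ▸ hcovO x1 h1)
    · exfalso
      rw [hs] at h12; simp only [if_neg h1, if_pos h2] at h12
      exact h1 (h12.symm ▸ hcovO x2 h2)
    · rw [hs] at h12; simpa only [if_neg h1, if_neg h2] using h12
  refine ⟨Equiv.ofBijective s (Finite.injective_iff_bijective.mp hsinj), ?_, ⟨y, ?_⟩⟩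
  · intro x
    by_cases hx : x ∈ O
    · left; simp only [Equiv.ofBijective_apply, hs, if_pos hx]
    · right; simp only [Equiv.ofBijective_apply, hs, if_neg hx]
  · simp only [Equiv.ofBijective_apply, hs, if_pos hyO]
    exact hcov y

structure RDCtx (n : ℕ) where
  v : Fin n → Fin n → ℝ → ℝ
  z : Fin n → Fin n → ℝ
  C : ℝ
  γ : ℝ
  l : ℝ
  L : ℝ
  ε : ℝ
  hanti : ∀ a r, StrictAnti (v a r)
  hbil : ∀ a r x y, x ≤ y → l * (y - x) ≤ v a r x - v a r y ∧ v a r x - v a r y ≤ L * (y - x)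
  hlpos : 0 < l
  hlL : l ≤ L
  hz : ∀ a r, v a r (z a r) = 0
  hγ : 0 < γ
  hsc : ∀ a, C + γ ≤ ∑ r, z a r
  hε : 0 < ε

namespace RDCtx

variable {n : ℕ} [NeZero n] (K : RDCtx n)

noncomputable def p0 (r : Fin n) : ℝ := Finset.univ.sup' Finset.univ_nonempty (fun a => K.z a r)
noncomputable def D : ℝ := (∑ r, K.p0 r) - K.C
noncomputable def pLo (r : Fin n) : ℝ := K.p0 r - K.D
noncomputable def Vmax : ℝ :=
  Finset.univ.sup' Finset.univ_nonempty (fun q : Fin n × Fin n => K.v q.1 q.2 (K.pLo q.2))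
noncomputable def ρ : ℝ := K.l * K.γ / n
noncomputable def δ : ℝ := K.ε * K.ρ / (1 + K.ε)
noncomputable def η : ℝ := K.δ / (2 * K.L)
noncomputable def q0 : ℝ := min (K.l * K.η) (K.δ / 2)
noncomputable def W (π : Equiv.Perm (Fin n)) (p : Fin n → ℝ) (a : Fin n) : ℝ :=
  K.v a (π a) (p (π a))
noncomputable def B (p : Fin n → ℝ) (a : Fin n) : ℝ :=
  Finset.univ.sup' Finset.univ_nonempty (fun r => K.v a r (p r))
noncomputable def Psi (π : Equiv.Perm (Fin n)) (p : Fin n → ℝ) : ℝ := ∑ a, K.W π p a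
def Inv (π : Equiv.Perm (Fin n)) (p : Fin n → ℝ) : Prop :=
  K.C ≤ ∑ r, p r ∧ (∀ r, p r ≤ K.p0 r) ∧ ∀ a, K.B p a ≤ max (K.W π p a + K.δ) 0
noncomputable def meas (π : Equiv.Perm (Fin n)) (p : Fin n → ℝ) : ℕ :=
  (⌊((n : ℝ) * K.Vmax + K.q0 - K.Psi π p) / K.q0⌋).toNat

lemma hLpos : 0 < K.L := lt_of_lt_of_le K.hlpos K.hlL
lemma npos (_K : RDCtx n) : (0:ℝ) < (n:ℝ) := by
  have := Fin.pos_iff_nonempty (n := n) |>.mpr inferInstance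
  exact_mod_cast this
lemma hρ : 0 < K.ρ := by
  have h1 := K.npos; have h2 := K.hlpos; have h3 := K.hγ
  unfold ρ; positivity
lemma hδ : 0 < K.δ := by
  have := K.hρ; have := K.hε; unfold δ; positivity
lemma hδρ : K.δ < K.ρ := by
  have hρ := K.hρ; have hε := K.hε
  unfold δ; rw [div_lt_iff₀ (by linarith)]; nlinarith
lemma hεδρ : K.ε * K.ρ = (1 + K.ε) * K.δ := by
  have hε := K.hε; unfold δ; field_simp
lemma hη : 0 < K.η := by
  have := K.hδ; have := K.hLpos
  unfold η; positivity
lemma hLη : K.L * K.η = K.δ / 2 := by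
  have := K.hLpos
  unfold η; field_simp
lemma hq0 : 0 < K.q0 := by
  have h1 := K.hδ; have h2 := K.hη; have h3 := K.hlpos
  unfold q0
  exact lt_min (by positivity) (by linarith)
lemma w_le_b (π : Equiv.Perm (Fin n)) (p : Fin n → ℝ) (a : Fin n) : K.W π p a ≤ K.B p a :=
  Finset.le_sup' (fun r => K.v a r (p r)) (Finset.mem_univ (π a))
lemma v_le_b (p : Fin n → ℝ) (a r : Fin n) : K.v a r (p r) ≤ K.B p a :=
  Finset.le_sup' (fun r => K.v a r (p r)) (Finset.mem_univ r)
lemma z_le_p0 (a r : Fin n) : K.z a r ≤ K.p0 r :=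
  Finset.le_sup' (fun a => K.z a r) (Finset.mem_univ a)
lemma price_lo {π : Equiv.Perm (Fin n)} {p : Fin n → ℝ} (h : K.Inv π p) (r : Fin n) :
    K.pLo r ≤ p r := by
  obtain ⟨h1, h2, _⟩ := h
  have e1 : p r + ∑ r' ∈ Finset.univ.erase r, p r' = ∑ r', p r' :=
    Finset.add_sum_erase _ _ (Finset.mem_univ r)
  have e2 : K.p0 r + ∑ r' ∈ Finset.univ.erase r, K.p0 r' = ∑ r', K.p0 r' :=
    Finset.add_sum_erase _ _ (Finset.mem_univ r)
  have hle : ∑ r' ∈ Finset.univ.erase r, p r' ≤ ∑ r' ∈ Finset.univ.erase r, K.p0 r' :=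
    Finset.sum_le_sum (fun r' _ => h2 r')
  unfold pLo D
  linarith
lemma psi_le {π : Equiv.Perm (Fin n)} {p : Fin n → ℝ} (h : K.Inv π p) :
    K.Psi π p ≤ (n : ℝ) * K.Vmax := by
  have hb : ∀ a : Fin n, K.W π p a ≤ K.Vmax := by
    intro a
    have h1 : K.v a (π a) (p (π a)) ≤ K.v a (π a) (K.pLo (π a)) :=
      (K.hanti a (π a)).antitone (K.price_lo h (π a))
    have h2 : K.v a (π a) (K.pLo (π a)) ≤ K.Vmax :=
      Finset.le_sup' (fun q : Fin n × Fin n => K.v q.1 q.2 (K.pLo q.2)) (Finset.mem_univ (a, π a))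
    exact le_trans h1 h2
  calc K.Psi π p ≤ ∑ _a : Fin n, K.Vmax := Finset.sum_le_sum (fun a _ => hb a)
    _ = (n:ℝ) * K.Vmax := by rw [Finset.sum_const]; simp [mul_comm]
lemma initial : K.Inv 1 K.p0 := by
  refine ⟨?_, fun r => le_rfl, ?_⟩
  · have a0 : Fin n := Classical.arbitrary _
    have h1 : ∑ r, K.z a0 r ≤ ∑ r, K.p0 r := Finset.sum_le_sum (fun r _ => K.z_le_p0 a0 r)
    have := K.hsc a0; have := K.hγ
    linarith
  · intro a
    have : K.B K.p0 a ≤ 0 := by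
      apply Finset.sup'_le
      intro r _
      have := (K.hanti a r).antitone (K.z_le_p0 a r)
      rw [K.hz a r] at this
      exact this
    exact le_trans this (le_max_right _ _)

lemma final {π : Equiv.Perm (Fin n)} {p : Fin n → ℝ} (h : K.Inv π p)
    (hsum : ∑ r, p r = K.C) :
    (∀ a r, K.v a r (p r) ≤ (1 + K.ε) * K.W π p a) ∧ (∀ a, 0 ≤ K.W π p a) := by
  have hρ := K.hρ; have hδ := K.hδ; have hδρ := K.hδρ; have hε := K.hε
  have hn := K.npos
  have key : ∀ a, K.ρ ≤ K.B p a := by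
    intro a
    obtain ⟨r, hr⟩ : ∃ r, p r ≤ K.z a r - K.γ / n := by
      by_contra hcon
      push_neg at hcon
      have hstrict : ∑ r, (K.z a r - K.γ / n) < ∑ r, p r :=
        Finset.sum_lt_sum_of_nonempty Finset.univ_nonempty (fun r _ => hcon r)
      have hsum2 : ∑ r, (K.z a r - K.γ / n) = (∑ r, K.z a r) - K.γ := by
        rw [Finset.sum_sub_distrib]
        have e : ∑ _r : Fin n, K.γ / (n:ℝ) = (n:ℝ) * (K.γ / (n:ℝ)) := by
          rw [Finset.sum_const, nsmul_eq_mul]; simp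
        rw [e]
        have hn' : (n:ℝ) ≠ 0 := ne_of_gt hn
        field_simp
      have := K.hsc a
      rw [hsum2, hsum] at hstrict
      linarith
    have h1 : K.v a r (K.z a r - K.γ / n) ≥ K.ρ := by
      have hgn : 0 < K.γ / (n:ℝ) := div_pos K.hγ hn
      have hb := (K.hbil a r (K.z a r - K.γ / n) (K.z a r) (by linarith)).1
      rw [K.hz a r] at hb
      have : K.z a r - (K.z a r - K.γ / n) = K.γ / n := by ring
      rw [this] at hb
      unfold ρ
      have he : K.l * (K.γ / (n:ℝ)) = K.l * K.γ / (n:ℝ) := by ring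
      linarith [hb, he]
    have h2 : K.v a r (K.z a r - K.γ / n) ≤ K.v a r (p r) := (K.hanti a r).antitone hr
    linarith [K.v_le_b p a r]
  have hW : ∀ a, K.B p a ≤ K.W π p a + K.δ := by
    intro a
    have h2 := h.2.2 a
    rcases le_or_gt (K.W π p a + K.δ) 0 with hc | hc
    · rw [max_eq_right hc] at h2
      linarith [key a]
    · rwa [max_eq_left (le_of_lt hc)] at h2
  constructor
  · intro a r
    have h1 : K.v a r (p r) ≤ K.W π p a + K.δ := le_trans (K.v_le_b p a r) (hW a)
    have h2 : K.ρ - K.δ ≤ K.W π p a := by linarith [key a, hW a]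
    have h3 : K.δ ≤ K.ε * K.W π p a := by nlinarith [K.hεδρ]
    linarith
  · intro a
    have h2 : K.ρ - K.δ ≤ K.W π p a := by linarith [key a, hW a]
    linarith



lemma step {π : Equiv.Perm (Fin n)} {p : Fin n → ℝ} (h : K.Inv π p)
    (hlt : K.C < ∑ r, p r) :
    ∃ (π' : Equiv.Perm (Fin n)) (p' : Fin n → ℝ), K.Inv π' p' ∧
      ((∑ r, p' r) = K.C ∨ K.Psi π p + K.q0 ≤ K.Psi π' p') := by
  classical
  have hδ := K.hδ; have hη := K.hη; have hq0 := K.hq0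
  have hLpos := K.hLpos; have hlpos := K.hlpos; have hLη := K.hLη
  set α := min K.η ((∑ r, p r) - K.C) with hα
  have hαpos : 0 < α := lt_min hη (by linarith)
  have hαη : α ≤ K.η := min_le_left _ _
  have hαs : α ≤ (∑ r, p r) - K.C := min_le_right _ _
  by_cases hA : ∃ r, ∀ a, a ≠ π.symm r → K.v a r (p r - α) ≤ max (K.W π p a + K.δ) 0
  · -- lowering move
    obtain ⟨r, hr⟩ := hA
    set occ := π.symm r with hocc
    have hπocc : π occ = r := Equiv.apply_symm_apply π r
    set p' := Function.update p r (p r - α) with hp'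
    have hp'r : p' r = p r - α := Function.update_self r _ p
    have hp'ne : ∀ r', r' ≠ r → p' r' = p r' := fun r' h' => Function.update_of_ne h' _ p
    have hsum' : ∑ r', p' r' = (∑ r', p r') - α := by
      rw [hp', Finset.sum_update_of_mem (Finset.mem_univ r)]
      have h2 : ∑ r', p r' = p r + ∑ r' ∈ Finset.univ \ {r}, p r' := by
        rw [← Finset.erase_eq, ← Finset.add_sum_erase _ p (Finset.mem_univ r)]
      linarith
    have hW'occ : K.W π p' occ = K.v occ r (p r - α) := by
      unfold W; rw [hπocc, hp'r]
    have hW'ne : ∀ a, a ≠ occ → K.W π p' a = K.W π p a := by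
      intro a ha
      have : π a ≠ r := by
        intro hc
        exact ha (by rw [hocc, ← hc, Equiv.symm_apply_apply])
      unfold W; rw [hp'ne _ this]
    have hWocc : K.W π p occ = K.v occ r (p r) := by unfold W; rw [hπocc]
    have hWmono : ∀ a, K.W π p a ≤ K.W π p' a := by
      intro a
      by_cases ha : a = occ
      · subst ha
        rw [hW'occ, hWocc]
        exact (K.hanti occ r).antitone (by linarith)
      · rw [hW'ne a ha]
    have hInv' : K.Inv π p' := by
      refine ⟨by rw [hsum']; linarith, ?_, ?_⟩
      · intro r'
        by_cases hr' : r' = r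
        · subst hr'; rw [hp'r]; linarith [h.2.1 r']
        · rw [hp'ne _ hr']; exact h.2.1 r'
      · intro a
        apply Finset.sup'_le
        intro r' _
        have hmax : max (K.W π p a + K.δ) 0 ≤ max (K.W π p' a + K.δ) 0 :=
          max_le_max (by linarith [hWmono a]) le_rfl
        by_cases hr' : r' = r
        · subst hr'
          rw [hp'r]
          by_cases ha : a = occ
          · subst ha
            rw [← hW'occ]
            exact le_trans (by linarith) (le_max_left _ _)
          · exact le_trans (hr a ha) hmax
        · rw [hp'ne _ hr']
          exact le_trans (le_trans (K.v_le_b p a r') (h.2.2 a)) hmax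
    refine ⟨π, p', hInv', ?_⟩
    have hgain : K.l * α ≤ K.W π p' occ - K.W π p occ := by
      rw [hW'occ, hWocc]
      have hb := (K.hbil occ r (p r - α) (p r) (by linarith)).1
      have he : p r - (p r - α) = α := by ring
      rw [he] at hb
      linarith
    have hPsidiff : K.Psi π p' - K.Psi π p = K.W π p' occ - K.W π p occ := by
      unfold Psi
      have e1 : ∑ a, K.W π p' a = K.W π p' occ + ∑ a ∈ Finset.univ.erase occ, K.W π p' a :=
        (Finset.add_sum_erase _ _ (Finset.mem_univ occ)).symm
      have e2 : ∑ a, K.W π p a = K.W π p occ + ∑ a ∈ Finset.univ.erase occ, K.W π p a :=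
        (Finset.add_sum_erase _ _ (Finset.mem_univ occ)).symm
      have e3 : ∑ a ∈ Finset.univ.erase occ, K.W π p' a
          = ∑ a ∈ Finset.univ.erase occ, K.W π p a :=
        Finset.sum_congr rfl (fun a ha => hW'ne a (Finset.ne_of_mem_erase ha))
      rw [e1, e2, e3]; ring
    by_cases hcase : K.η ≤ (∑ r, p r) - K.C
    · right
      have hαeq : α = K.η := min_eq_left hcase
      have : K.q0 ≤ K.l * K.η := min_le_left _ _
      rw [hαeq] at hgain
      linarith
    · left
      have hαeq : α = (∑ r, p r) - K.C := min_eq_right (by linarith)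
      rw [hsum', hαeq]; ring
  · -- rotation move
    push_neg at hA
    choose f hf1 hf2 using hA
    set cov : Fin n → Fin n := fun r => π (f r) with hcovdef
    have hcov : ∀ r, cov r ≠ r := by
      intro r hc
      exact hf1 r ((Equiv.apply_eq_iff_eq_symm_apply π).mp hc)
    obtain ⟨σ, hσ, xh, hxh⟩ := exists_rotation cov hcov (Nat.pos_of_ne_zero (NeZero.ne n))
    set π' := π.trans σ.symm with hπ'
    have hπ'a : ∀ a, π' a = σ.symm (π a) := fun a => rfl
    have hdi : ∀ a, K.W π p a ≤ K.W π' p a ∧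
        (σ.symm (π a) ≠ π a → K.W π p a + K.δ / 2 ≤ K.W π' p a) := by
      intro a
      have hσr' : σ (σ.symm (π a)) = π a := Equiv.apply_symm_apply σ (π a)
      rcases hσ (σ.symm (π a)) with hmov | hfix
      · -- mover
        have hcova : cov (σ.symm (π a)) = π a := by rw [← hmov, hσr']
        have hfa : f (σ.symm (π a)) = a := π.injective hcova
        set r' := σ.symm (π a) with hr'def
        have hW' : K.W π' p a = K.v a r' (p r') := by unfold W; rw [hπ'a]
        have hbig := hf2 r'
        rw [hfa] at hbig
        have hup := (K.hbil a r' (p r' - α) (p r') (by linarith)).2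
        have he : p r' - (p r' - α) = α := by ring
        rw [he] at hup
        have hLα : K.L * α ≤ K.δ / 2 := by
          have := mul_le_mul_of_nonneg_left hαη (le_of_lt hLpos)
          linarith
        have hlow : max (K.W π p a + K.δ) 0 - K.δ / 2 ≤ K.v a r' (p r') := by
          have h1 : K.v a r' (p r' - α) - K.L * α ≤ K.v a r' (p r') := by linarith
          have h2 : max (K.W π p a + K.δ) 0 ≤ K.v a r' (p r' - α) := le_of_lt hbig
          linarith
        have hmax1 : K.W π p a + K.δ ≤ max (K.W π p a + K.δ) 0 := le_max_left _ _
        constructor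
        · rw [hW']; linarith
        · intro _; rw [hW']; linarith
      · -- fixed
        have : σ.symm (π a) = π a := by rw [← hfix, hσr']
        have hWeq : K.W π' p a = K.W π p a := by unfold W; rw [hπ'a, this]
        exact ⟨le_of_eq hWeq.symm, fun hne => absurd this hne⟩
    have hInv' : K.Inv π' p := by
      refine ⟨h.1, h.2.1, ?_⟩
      intro a
      exact le_trans (h.2.2 a) (max_le_max (by linarith [(hdi a).1]) le_rfl)
    refine ⟨π', p, hInv', Or.inr ?_⟩
    -- strict mover
    set a1 := π.symm (σ xh) with ha1
    have hπa1 : π a1 = σ xh := Equiv.apply_symm_apply π (σ xh)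
    have hne1 : σ.symm (π a1) ≠ π a1 := by
      rw [hπa1, Equiv.symm_apply_apply]
      exact fun hc => hxh (by rw [← hc])
    have hstrict := (hdi a1).2 hne1
    have hsumdiff : K.Psi π' p - K.Psi π p = ∑ a, (K.W π' p a - K.W π p a) := by
      unfold Psi; rw [Finset.sum_sub_distrib]
    have hsingle : K.W π' p a1 - K.W π p a1 ≤ ∑ a, (K.W π' p a - K.W π p a) :=
      Finset.single_le_sum (f := fun a => K.W π' p a - K.W π p a)
        (fun a _ => by simpa using sub_nonneg.mpr (hdi a).1) (Finset.mem_univ a1)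
    have hq2 : K.q0 ≤ K.δ / 2 := min_le_right _ _
    linarith

lemma argge {π : Equiv.Perm (Fin n)} {p : Fin n → ℝ} (h : K.Inv π p) :
    (1:ℤ) ≤ ⌊((n : ℝ) * K.Vmax + K.q0 - K.Psi π p) / K.q0⌋ := by
  apply Int.le_floor.mpr
  have h1 := K.psi_le h
  have hq := K.hq0
  push_cast
  rw [le_div_iff₀ hq]
  linarith

lemma driver : ∃ (π : Equiv.Perm (Fin n)) (p : Fin n → ℝ), K.Inv π p ∧ (∑ r, p r) = K.C := by
  suffices h : ∀ (N : ℕ) (π : Equiv.Perm (Fin n)) (p : Fin n → ℝ), K.Inv π p → K.meas π p ≤ N →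
      ∃ (π' : Equiv.Perm (Fin n)) (p' : Fin n → ℝ), K.Inv π' p' ∧ (∑ r, p' r) = K.C by
    exact h (K.meas 1 K.p0) 1 K.p0 K.initial le_rfl
  intro N
  induction N with
  | zero =>
    intro π p h hm
    by_cases hsum : (∑ r, p r) = K.C
    · exact ⟨π, p, h, hsum⟩
    · exfalso
      have h1 := K.argge h
      unfold meas at hm
      omega
  | succ N ih =>
    intro π p h hm
    by_cases hsum : (∑ r, p r) = K.C
    · exact ⟨π, p, h, hsum⟩
    · have hlt : K.C < ∑ r, p r := lt_of_le_of_ne h.1 (Ne.symm hsum)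
      obtain ⟨π', p', hInv', hor⟩ := K.step h hlt
      rcases hor with hdone | hpsi
      · exact ⟨π', p', hInv', hdone⟩
      · apply ih π' p' hInv'
        have hq := K.hq0
        have hdivsub : ((n : ℝ) * K.Vmax + K.q0 - K.Psi π' p') / K.q0
            ≤ ((n : ℝ) * K.Vmax + K.q0 - K.Psi π p) / K.q0 - 1 := by
          rw [le_sub_iff_add_le, div_add' _ _ _ (ne_of_gt hq), div_le_div_iff_of_pos_right hq]
          linarith
        have hfl : ⌊((n : ℝ) * K.Vmax + K.q0 - K.Psi π' p') / K.q0⌋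
            ≤ ⌊((n : ℝ) * K.Vmax + K.q0 - K.Psi π p) / K.q0⌋ - 1 := by
          have h2 := Int.floor_mono hdivsub
          rw [show ((n : ℝ) * K.Vmax + K.q0 - K.Psi π p) / K.q0 - 1
            = ((n : ℝ) * K.Vmax + K.q0 - K.Psi π p) / K.q0 - ((1:ℤ):ℝ) by push_cast; ring,
            Int.floor_sub_intCast] at h2
          exact h2
        have h3 := K.argge hInv'
        have h4 := K.argge h
        unfold meas at hm ⊢
        omega

end RDCtx

lemma strict_case {n : ℕ} (hn : 0 < n) (v : Fin n → Fin n → ℝ → ℝ)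
    (hanti : ∀ a r, StrictAnti (v a r)) (hpl : ∀ a r, PiecewiseLinear (v a r))
    (ε : ℝ) (hε : 0 < ε) (C : ℝ) (z : Fin n → Fin n → ℝ) (hz : ∀ a r, v a r (z a r) = 0)
    (γ : ℝ) (hγ : 0 < γ) (hsc : ∀ a, C + γ ≤ ∑ r, z a r) :
    ∃ (π : Equiv.Perm (Fin n)) (p : Fin n → ℝ),
      (∀ a r, v a r (p r) ≤ (1 + ε) * v a (π a) (p (π a))) ∧ (∑ r, p r) = C ∧
      ∀ a, 0 ≤ v a (π a) (p (π a)) := by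
  haveI : NeZero n := ⟨hn.ne'⟩
  have H : ∀ a r, ∃ l L : ℝ, 0 < l ∧ l ≤ L ∧
      ∀ x y : ℝ, x ≤ y → l * (y - x) ≤ v a r x - v a r y ∧ v a r x - v a r y ≤ L * (y - x) :=
    fun a r => pl_bilip _ (hpl a r) (hanti a r)
  choose lf Lf hpos hle hbd using H
  have hne : (Finset.univ : Finset (Fin n × Fin n)).Nonempty := Finset.univ_nonempty
  set l := Finset.univ.inf' hne (fun q : Fin n × Fin n => lf q.1 q.2) with hldef
  set L := Finset.univ.sup' hne (fun q : Fin n × Fin n => Lf q.1 q.2) with hLdef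
  have hl_le : ∀ a r, l ≤ lf a r := fun a r =>
    Finset.inf'_le (fun q : Fin n × Fin n => lf q.1 q.2) (Finset.mem_univ (a, r))
  have hL_ge : ∀ a r, Lf a r ≤ L := fun a r =>
    Finset.le_sup' (fun q : Fin n × Fin n => Lf q.1 q.2) (Finset.mem_univ (a, r))
  have hlpos : 0 < l := by
    rw [hldef, Finset.lt_inf'_iff]
    exact fun q _ => hpos q.1 q.2
  have a0 : Fin n := ⟨0, hn⟩
  have hlL : l ≤ L := le_trans (hl_le a0 a0) (le_trans (hle a0 a0) (hL_ge a0 a0))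
  have hbil : ∀ a r x y, x ≤ y →
      l * (y - x) ≤ v a r x - v a r y ∧ v a r x - v a r y ≤ L * (y - x) := by
    intro a r x y hxy
    obtain ⟨h1, h2⟩ := hbd a r x y hxy
    constructor
    · calc l * (y - x) ≤ lf a r * (y - x) :=
            mul_le_mul_of_nonneg_right (hl_le a r) (by linarith)
        _ ≤ _ := h1
    · calc v a r x - v a r y ≤ Lf a r * (y - x) := h2
        _ ≤ L * (y - x) := mul_le_mul_of_nonneg_right (hL_ge a r) (by linarith)
  set K : RDCtx n := ⟨v, z, C, γ, l, L, ε, hanti, hbil, hlpos, hlL, hz, hγ, hsc, hε⟩ with hK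
  obtain ⟨π, p, hInv, hsum⟩ := K.driver
  obtain ⟨h1, h2⟩ := K.final hInv hsum
  exact ⟨π, p, fun a r => h1 a r, hsum, fun a => h2 a⟩

open Filter

/-- Theorem 3.4 (existence content): fixed total rent with nonnegative
utilities, under the scaling assumption `∑_r z a r ≥ C` where `z a r` is the
zero-utility price of room `r` for agent `a`. -/
theorem exists_eps_envy_free_fixed_rent_nonneg_utils
    (n : ℕ) (hn : 0 < n) (v : Fin n → Fin n → ℝ → ℝ)
    (hcont : ∀ a r, Continuous (v a r))
    (hanti : ∀ a r, StrictAnti (v a r))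
    (hpl : ∀ a r, PiecewiseLinear (v a r))
    (hnonneg : ∀ a r, 0 ≤ v a r 0)
    (ε : ℝ) (hε : 0 < ε) (C : ℝ)
    (z : Fin n → Fin n → ℝ)
    (hz : ∀ a r, v a r (z a r) = 0)
    (hscale : ∀ a, C ≤ ∑ r, z a r) :
    ∃ (π : Equiv.Perm (Fin n)) (p : Fin n → ℝ),
      EpsEF n ε v π p ∧ (∑ r, p r) = C ∧
      ∀ a, 0 ≤ v a (π a) (p (π a)) := by
  haveI : NeZero n := ⟨hn.ne'⟩
  have hsol : ∀ k : ℕ, ∃ (π : Equiv.Perm (Fin n)) (p : Fin n → ℝ),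
      (∀ a r, v a r (p r) ≤ (1 + ε) * v a (π a) (p (π a))) ∧
      (∑ r, p r) = C - 1/((k:ℝ)+1) ∧ ∀ a, 0 ≤ v a (π a) (p (π a)) := by
    intro k
    have hpos : (0:ℝ) < 1/((k:ℝ)+1) := by positivity
    apply strict_case hn v hanti hpl ε hε (C - 1/((k:ℝ)+1)) z hz (1/((k:ℝ)+1)) hpos
    intro a
    have := hscale a
    linarith
  choose πs ps hEF hS hNN using hsol
  obtain ⟨π, hπinf⟩ := Finite.exists_infinite_fiber πs
  have hfreq : ∃ᶠ k in atTop, πs k = π := by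
    rw [Nat.frequently_atTop_iff_infinite]
    have := Set.infinite_coe_iff.mp hπinf
    convert this using 1
    rfl
  obtain ⟨φ, hφmono, hφ⟩ := extraction_of_frequently_atTop hfreq
  set hi : Fin n → ℝ := fun r => z (π.symm r) r with hhi
  set lo : Fin n → ℝ := fun r => C - 1 - ((∑ r', hi r') - hi r) with hlo
  have hub : ∀ k r, ps (φ k) r ≤ hi r := by
    intro k r
    have hA := hNN (φ k) (π.symm r)
    rw [hφ k] at hA
    rw [Equiv.apply_symm_apply π r] at hA
    by_contra hcon
    push_neg at hcon
    have hlt := hanti (π.symm r) r hcon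
    rw [hz (π.symm r) r] at hlt
    linarith
  have hlb : ∀ k r, lo r ≤ ps (φ k) r := by
    intro k r
    have e1 : ps (φ k) r + ∑ r' ∈ Finset.univ.erase r, ps (φ k) r' = ∑ r', ps (φ k) r' :=
      Finset.add_sum_erase _ _ (Finset.mem_univ r)
    have e2 : hi r + ∑ r' ∈ Finset.univ.erase r, hi r' = ∑ r', hi r' :=
      Finset.add_sum_erase _ _ (Finset.mem_univ r)
    have hle : ∑ r' ∈ Finset.univ.erase r, ps (φ k) r' ≤ ∑ r' ∈ Finset.univ.erase r, hi r' :=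
      Finset.sum_le_sum (fun r' _ => hub k r')
    have hS' := hS (φ k)
    have hb1 : (1:ℝ)/((φ k : ℝ)+1) ≤ 1 := by
      rw [div_le_one (by positivity)]
      have : (0:ℝ) ≤ ((φ k : ℕ):ℝ) := by positivity
      linarith
    simp only [hlo]
    linarith
  have hcomp : IsCompact (Set.Icc lo hi) := isCompact_Icc
  have hmem : ∀ k, ps (φ k) ∈ Set.Icc lo hi := by
    intro k
    rw [Set.mem_Icc]
    exact ⟨fun r => hlb k r, fun r => hub k r⟩
  obtain ⟨pl, hplmem, ψ, hψmono, hψtend⟩ := hcomp.tendsto_subseq hmem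
  have hcoord : ∀ r, Tendsto (fun k => ps (φ (ψ k)) r) atTop (nhds (pl r)) := by
    rw [tendsto_pi_nhds] at hψtend
    exact fun r => hψtend r
  have hvt : ∀ a r, Tendsto (fun k => v a r (ps (φ (ψ k)) r)) atTop (nhds (v a r (pl r))) :=
    fun a r => ((hcont a r).tendsto (pl r)).comp (hcoord r)
  have hsumtend : Tendsto (fun k => ∑ r, ps (φ (ψ k)) r) atTop (nhds (∑ r, pl r)) :=
    tendsto_finset_sum _ (fun r _ => hcoord r)
  have hinvt : Tendsto (fun k => (1:ℝ)/((φ (ψ k):ℝ)+1)) atTop (nhds 0) := by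
    apply squeeze_zero (fun k => by positivity) (fun k => ?_)
      tendsto_one_div_add_atTop_nhds_zero_nat
    have h1 : k ≤ φ (ψ k) := le_trans hψmono.le_apply hφmono.le_apply
    apply one_div_le_one_div_of_le (by positivity)
    have : ((k:ℕ):ℝ) ≤ ((φ (ψ k) : ℕ):ℝ) := by exact_mod_cast h1
    linarith
  have hsumeq : ∑ r, pl r = C := by
    have h2 : Tendsto (fun k => ∑ r, ps (φ (ψ k)) r) atTop (nhds (C - 0)) := by
      apply Tendsto.congr (f₁ := fun k => C - 1/((φ (ψ k):ℝ)+1))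
      · intro k
        exact (hS (φ (ψ k))).symm
      · exact tendsto_const_nhds.sub hinvt
    have := tendsto_nhds_unique hsumtend h2
    rw [this]; ring
  have hNNlim : ∀ a, 0 ≤ v a (π a) (pl (π a)) := by
    intro a
    apply ge_of_tendsto' (hvt a (π a))
    intro k
    have := hNN (φ (ψ k)) a
    rwa [hφ (ψ k)] at this
  have hEFlim : ∀ a r, v a r (pl r) ≤ (1 + ε) * v a (π a) (pl (π a)) := by
    intro a r
    apply le_of_tendsto_of_tendsto' (hvt a r) (tendsto_const_nhds.mul (hvt a (π a)))
    intro k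
    have := hEF (φ (ψ k)) a r
    rwa [hφ (ψ k)] at this
  refine ⟨π, pl, ?_, hsumeq, hNNlim⟩
  intro a
  constructor
  · intro _ r
    exact hEFlim a r
  · intro hneg
    exact fun r => absurd hneg (not_lt.mpr (hNNlim a))
end

section
/- Approximation transfer lemma (core of the proof of Lemma 5.5): Let ε > 0 and let v, v̄ : Fin n → Fin n → ℝ → ℝ be utilities such that for all agents a, rooms r, and prices x: (i) v a r x ≤ v̄ a r x; (ii) v a r x ≥ 0 ↔ v̄ a r x ≥ 0; (iii) if v a r x ≥ 0 then v̄ a r x ≤ (1+ε) · v a r x; and (iv) if v a r x < 0 then (1+ε) · v̄ a r x ≤ v a r x. Then every envy-free solution (π, p) of the instance with utilities v̄ is an ε-envy-free solution of the instance with utilities v. -/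
/-- Approximation transfer lemma (core of the proof of Lemma 5.5). -/
theorem approximation_transfer
    (n : ℕ) (ε : ℝ) (hε : 0 < ε)
    (v vbar : Fin n → Fin n → ℝ → ℝ)
    (h₁ : ∀ a r x, v a r x ≤ vbar a r x)
    (h₂ : ∀ a r x, 0 ≤ v a r x ↔ 0 ≤ vbar a r x)
    (h₃ : ∀ a r x, 0 ≤ v a r x → vbar a r x ≤ (1 + ε) * v a r x)
    (h₄ : ∀ a r x, v a r x < 0 → (1 + ε) * vbar a r x ≤ v a r x)
    (π : Equiv.Perm (Fin n)) (p : Fin n → ℝ)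
    (hEF : ∀ a r, vbar a r (p r) ≤ vbar a (π a) (p (π a))) :
    EpsEF n ε v π p := by
  intro a
  constructor
  · intro hpos r
    calc v a r (p r) ≤ vbar a r (p r) := h₁ a r (p r)
      _ ≤ vbar a (π a) (p (π a)) := hEF a r
      _ ≤ (1 + ε) * v a (π a) (p (π a)) := h₃ a (π a) (p (π a)) hpos
  · intro hneg r
    have hb : (1 + ε) * vbar a r (p r) ≤ (1 + ε) * vbar a (π a) (p (π a)) :=
      mul_le_mul_of_nonneg_left (hEF a r) (by linarith)
    have : (1 + ε) * vbar a r (p r) ≤ v a (π a) (p (π a)) :=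
      hb.trans (h₄ a (π a) (p (π a)) hneg)
    calc (1 + ε) * v a r (p r) ≤ (1 + ε) * vbar a r (p r) :=
        mul_le_mul_of_nonneg_left (h₁ a r (p r)) (by linarith)
      _ ≤ v a (π a) (p (π a)) := this
end

section
/- Lemma 5.2 (per-piece rounding properties): Fix ε > 0, real numbers x₁ < x₂, λ > 0, and H ∈ ℝ, and set B := H − λ·(x₂ − x₁). Let λ̄ := (1+ε)^⌈log λ / log(1+ε)⌉ be the least integer power of (1+ε) that is ≥ λ (so that λ̄/(1+ε) < λ ≤ λ̄). Then: (1) there exists x* with x₁ ≤ x* < x₂ such that H = B + λ̄·(x₂ − x*) + (λ̄/(1+ε))·(x* − x₁); and (2) for any such x*, defining v(x) := H − λ·(x − x₁), and v̄(x) := H − (λ̄/(1+ε))·(x − x₁) for x < x* and v̄(x) := B + λ̄·(x₂ − x) for x ≥ x*, the following hold for all x with x₁ ≤ x ≤ x₂: (a) v̄(x) ≥ v(x); (b) B + λ̄·(x₂ − x) ≥ v̄(x); (c) H − (λ̄/(1+ε))·(x − x₁) ≥ v̄(x); (d) if B ≥ 0 then v̄(x) ≥ 0; (e) if H ≤ 0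 then v̄(x) ≤ 0. -/
/-- Lemma 5.2 (per-piece rounding properties). -/
theorem per_piece_rounding
    (ε x₁ x₂ lam H : ℝ) (hε : 0 < ε) (hx : x₁ < x₂) (hlam : 0 < lam)
    (B lb : ℝ)
    (hB : B = H - lam * (x₂ - x₁))
    (hlb : lb = (1 + ε) ^ (⌈Real.log lam / Real.log (1 + ε)⌉ : ℤ)) :
    lb / (1 + ε) < lam ∧ lam ≤ lb ∧
    (∃ xs, x₁ ≤ xs ∧ xs < x₂ ∧
      H = B + lb * (x₂ - xs) + (lb / (1 + ε)) * (xs - x₁)) ∧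
    (∀ xs, x₁ ≤ xs → xs < x₂ →
      H = B + lb * (x₂ - xs) + (lb / (1 + ε)) * (xs - x₁) →
      ∀ x, x₁ ≤ x → x ≤ x₂ →
        (H - lam * (x - x₁) ≤
          (if x < xs then H - (lb / (1 + ε)) * (x - x₁)
            else B + lb * (x₂ - x))) ∧
        ((if x < xs then H - (lb / (1 + ε)) * (x - x₁)
            else B + lb * (x₂ - x)) ≤ B + lb * (x₂ - x)) ∧
        ((if x < xs then H - (lb / (1 + ε)) * (x - x₁)
            else B + lb * (x₂ - x)) ≤ H - (lb / (1 + ε)) * (x - x₁)) ∧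
        (0 ≤ B → 0 ≤
          (if x < xs then H - (lb / (1 + ε)) * (x - x₁)
            else B + lb * (x₂ - x))) ∧
        (H ≤ 0 →
          (if x < xs then H - (lb / (1 + ε)) * (x - x₁)
            else B + lb * (x₂ - x)) ≤ 0)) := by
  have h1ε : (1 : ℝ) < 1 + ε := by linarith
  have hεpos : (0 : ℝ) < 1 + ε := by linarith
  have hlogpos : 0 < Real.log (1 + ε) := Real.log_pos h1ε
  set k : ℤ := ⌈Real.log lam / Real.log (1 + ε)⌉ with hk
  have key : ∀ y : ℝ, Real.exp (y * Real.log (1 + ε)) = (1 + ε) ^ y := by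
    intro y
    rw [Real.rpow_def_of_pos hεpos, mul_comm]
  have hlbpos : 0 < lb := by
    rw [hlb]; exact zpow_pos hεpos k
  have hlam_le : lam ≤ lb := by
    have h1 : Real.log lam ≤ (k : ℝ) * Real.log (1 + ε) :=
      (div_le_iff₀ hlogpos).mp (Int.le_ceil _)
    calc lam = Real.exp (Real.log lam) := (Real.exp_log hlam).symm
      _ ≤ Real.exp ((k : ℝ) * Real.log (1 + ε)) := Real.exp_le_exp.mpr h1
      _ = (1 + ε) ^ ((k : ℤ) : ℝ) := key _
      _ = lb := by rw [Real.rpow_intCast, hlb]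
  have hdiv : lb / (1 + ε) < lam := by
    have h2 : ((k : ℝ) - 1) * Real.log (1 + ε) < Real.log lam := by
      have := Int.ceil_lt_add_one (Real.log lam / Real.log (1 + ε))
      rw [← hk] at this
      have h3 : (k : ℝ) - 1 < Real.log lam / Real.log (1 + ε) := by linarith
      exact (lt_div_iff₀ hlogpos).mp h3
    have : (1 + ε) ^ (((k - 1 : ℤ)) : ℝ) < lam := by
      calc (1 + ε) ^ (((k - 1 : ℤ)) : ℝ) = Real.exp (((k - 1 : ℤ) : ℝ) * Real.log (1 + ε)) :=
            (key _).symm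
        _ < Real.exp (Real.log lam) := by
            apply Real.exp_lt_exp.mpr; push_cast; exact h2
        _ = lam := Real.exp_log hlam
    rw [Real.rpow_intCast] at this
    have heq : lb / (1 + ε) = (1 + ε) ^ (k - 1 : ℤ) := by
      rw [hlb, zpow_sub_one₀ (ne_of_gt hεpos), div_eq_mul_inv]
    linarith [heq ▸ this]
  set a : ℝ := lb / (1 + ε) with ha
  have hapos : 0 < a := div_pos hlbpos hεpos
  have halb : a ≤ lb := by
    rw [ha, div_le_iff₀ hεpos]; nlinarith
  refine ⟨hdiv, hlam_le, ?_, ?_⟩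
  · refine ⟨(lb * x₂ - a * x₁ - lam * (x₂ - x₁)) / (lb - a), ?_, ?_, ?_⟩
    · rw [le_div_iff₀ (by nlinarith : (0:ℝ) < lb - a)]; nlinarith
    · rw [div_lt_iff₀ (by nlinarith : (0:ℝ) < lb - a)]; nlinarith
    · rw [hB]
      have hd : lb - a ≠ 0 := by nlinarith
      have hX := div_mul_cancel₀ (lb * x₂ - a * x₁ - lam * (x₂ - x₁)) hd
      linear_combination hX
  · intro xs hxs1 hxs2 heq x hx1 hx2
    have hkey : lam * (x₂ - x₁) = lb * (x₂ - xs) + a * (xs - x₁) := by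
      rw [hB] at heq; linarith
    split_ifs with hcase
    · refine ⟨by nlinarith, by nlinarith, le_refl _, ?_, ?_⟩
      · intro hBpos; nlinarith [heq]
      · intro hH; nlinarith
    · push_neg at hcase
      refine ⟨by nlinarith [hB], le_refl _, by nlinarith, ?_, ?_⟩
      · intro hBpos; nlinarith
      · intro hH; nlinarith [hB]
end

section
/- Lemma B.1 (characterization of envy-free allocations under quasilinear utilities): Let B : Fin n → Fin n → ℝ be base values, giving quasilinear utilities v a r x := B a r − x. For every permutation π of Fin n, the following are equivalent: (i) there exists a price vector p : Fin n → ℝ such that B a (π a) − p (π a) ≥ B a r − p r for all agents a and rooms r (i.e., π can be coupled with a price vector to form an envy-free solution); (ii) π is a maximum-weight perfect matching, i.e., ∑_a B a (σ a) ≤ ∑_a B a (π a) for every permutation σ of Fin n. -/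
open List Finset

set_option linter.unusedSectionVars false

variable {α : Type*}

/-- Weight of a walk given as a list of vertices. -/
def wcost (w : α → α → ℝ) : List α → ℝ
  | [] => 0
  | [_] => 0
  | a :: b :: t => w a b + wcost w (b :: t)

lemma wcost_nil (w : α → α → ℝ) : wcost w [] = 0 := rfl
lemma wcost_single (w : α → α → ℝ) (a : α) : wcost w [a] = 0 := rfl
lemma wcost_cons_cons (w : α → α → ℝ) (a b : α) (t : List α) :
    wcost w (a :: b :: t) = w a b + wcost w (b :: t) := rfl

lemma wcost_append (w : α → α → ℝ) (l1 : List α) (x : α) (l2 : List α) :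
    wcost w (l1 ++ x :: l2) = wcost w (l1 ++ [x]) + wcost w (x :: l2) := by
  induction l1 with
  | nil => simp [wcost_single]
  | cons a t ih =>
    cases t with
    | nil => simp [wcost_cons_cons, wcost_single]
    | cons b t' =>
      simp only [cons_append, wcost_cons_cons] at ih ⊢
      rw [ih]; ring

lemma map_sum_get (f : α → ℝ) (l : List α) :
    (l.map f).sum = ∑ i : Fin l.length, f (l.get i) := by
  conv_lhs => rw [← List.ofFn_get l]
  rw [List.map_ofFn, List.sum_ofFn]
  rfl

lemma wcost_ofFn (w : α → α → ℝ) :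
    ∀ (m : ℕ) (g : Fin (m + 1) → α),
      wcost w (List.ofFn g) = ∑ i : Fin m, w (g i.castSucc) (g i.succ) := by
  intro m
  induction m with
  | zero => intro g; simp [List.ofFn_succ, wcost_single]
  | succ m ih =>
    intro g
    have e : List.ofFn g = g 0 :: List.ofFn (fun i : Fin (m+1) => g i.succ) := by
      rw [List.ofFn_succ]
    have e2 : List.ofFn (fun i : Fin (m+1) => g i.succ)
        = g (Fin.succ 0) :: List.ofFn (fun i : Fin m => g i.succ.succ) := by
      rw [List.ofFn_succ]
    rw [e, e2, wcost_cons_cons, ← e2, ih, Fin.sum_univ_succ]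
    simp [Fin.castSucc_zero, Fin.succ_castSucc, -Fin.castSucc_succ]

lemma ofFn_snoc_eq (x : α) (l2 : List α) :
    (x :: l2) ++ [x] = List.ofFn (Fin.snoc (x :: l2).get x) := by
  rw [List.ofFn_succ' (Fin.snoc (x :: l2).get x)]
  simp only [Fin.snoc_castSucc, Fin.snoc_last]
  simp [List.ofFn_get, List.concat_eq_append]

lemma wcost_cycle (w : α → α → ℝ) (x : α) (l2 : List α) :
    wcost w ((x :: l2) ++ [x])
      = ∑ i : Fin (l2.length + 1),
          w ((x :: l2).get i)
            ((x :: l2).get ⟨(i.1 + 1) % (l2.length + 1), Nat.mod_lt _ (Nat.succ_pos _)⟩) := by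
  rw [ofFn_snoc_eq x l2]
  rw [show wcost w (List.ofFn (Fin.snoc (x :: l2).get x)) = _ from
    wcost_ofFn w (l2.length + 1) (Fin.snoc (x :: l2).get x)]
  apply Finset.sum_congr rfl
  intro i _
  congr 1
  · simp
  · rcases Nat.lt_or_ge (i.1 + 1) (l2.length + 1) with hlt | hge
    · have hsucc : i.succ = Fin.castSucc ⟨i.1 + 1, hlt⟩ := by ext; simp
      rw [hsucc, Fin.snoc_castSucc]
      congr 1
      ext
      simp [Nat.mod_eq_of_lt hlt]
    · have heq : i.1 + 1 = l2.length + 1 := le_antisymm i.2 hge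
      have hsucc : i.succ = Fin.last (l2.length + 1) := by ext; simpa using heq
      rw [hsucc, Fin.snoc_last]
      have hmod : (i.1 + 1) % (l2.length + 1) = 0 := by rw [heq, Nat.mod_self]
      simp only [hmod]
      rfl

/-- Any non-nodup list splits around a duplicated element with a nodup
segment between the two occurrences. -/
lemma exists_nodup_cycle_split :
    ∀ L : List α, ¬ L.Nodup →
      ∃ (l1 : List α) (x : α) (l2 l3 : List α),
        L = l1 ++ (x :: l2) ++ (x :: l3) ∧ (x :: l2).Nodup := by
  intro L
  induction L with
  | nil => intro h; exact absurd List.nodup_nil h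
  | cons a t ih =>
    intro h
    by_cases ht : t.Nodup
    · have ha : a ∈ t := by
        by_contra ha
        exact h (List.nodup_cons.mpr ⟨ha, ht⟩)
      obtain ⟨l2, l3, rfl⟩ := List.append_of_mem ha
      refine ⟨[], a, l2, l3, by simp, ?_⟩
      rw [List.nodup_cons]
      have h2 := ht
      rw [List.nodup_append] at h2
      exact ⟨fun hal2 => h2.2.2 a hal2 a List.mem_cons_self rfl, h2.1⟩
    · obtain ⟨l1, x, l2, l3, rfl, hnd⟩ := ih ht
      exact ⟨a :: l1, x, l2, l3, by simp, hnd⟩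

section BF

variable [Fintype α] [DecidableEq α] [Nonempty α]

/-- Bellman–Ford iteration. -/
noncomputable def bf (w : α → α → ℝ) : ℕ → α → ℝ
  | 0, _ => 0
  | k + 1, s =>
      min (bf w k s)
        (Finset.univ.inf' Finset.univ_nonempty (fun r => bf w k r + w s r))

lemma bf_zero (w : α → α → ℝ) (s : α) : bf w 0 s = 0 := rfl

lemma bf_succ_eq (w : α → α → ℝ) (k : ℕ) (s : α) :
    bf w (k + 1) s = min (bf w k s)
        (Finset.univ.inf' Finset.univ_nonempty (fun r => bf w k r + w s r)) := by
  rw [bf]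

lemma bf_succ_le (w : α → α → ℝ) (k : ℕ) (s : α) :
    bf w (k + 1) s ≤ bf w k s := by
  rw [bf_succ_eq]; exact min_le_left _ _

lemma bf_step (w : α → α → ℝ) (k : ℕ) (s r : α) :
    bf w (k + 1) s ≤ bf w k r + w s r := by
  rw [bf_succ_eq]
  exact le_trans (min_le_right _ _) (Finset.inf'_le _ (Finset.mem_univ r))

lemma bf_le_wcost (w : α → α → ℝ) :
    ∀ (k : ℕ) (s : α) (l : List α), l.length ≤ k →
      bf w k s ≤ wcost w (s :: l) := by
  intro k
  induction k with
  | zero =>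
    intro s l hl
    have : l = [] := List.length_eq_zero_iff.mp (Nat.le_zero.mp hl)
    subst this
    simp [bf_zero, wcost_single]
  | succ k ih =>
    intro s l hl
    cases l with
    | nil =>
      calc bf w (k+1) s ≤ bf w k s := bf_succ_le w k s
        _ ≤ wcost w [s] := ih s [] (Nat.zero_le k)
    | cons r t =>
      have ht : t.length ≤ k := by simpa using hl
      calc bf w (k+1) s ≤ bf w k r + w s r := bf_step w k s r
        _ ≤ wcost w (r :: t) + w s r := by
            have := ih r t ht; linarith
        _ = wcost w (s :: r :: t) := by rw [wcost_cons_cons]; ring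

lemma bf_exists_wcost (w : α → α → ℝ) :
    ∀ (k : ℕ) (s : α), ∃ l : List α, bf w k s = wcost w (s :: l) := by
  intro k
  induction k with
  | zero => intro s; exact ⟨[], by simp [bf_zero, wcost_single]⟩
  | succ k ih =>
    intro s
    rcases min_choice (bf w k s)
        (Finset.univ.inf' Finset.univ_nonempty (fun r => bf w k r + w s r)) with h | h
    · obtain ⟨l, hl⟩ := ih s
      exact ⟨l, by rw [bf_succ_eq, h, hl]⟩
    · obtain ⟨r, -, hr⟩ := Finset.exists_mem_eq_inf' Finset.univ_nonempty
        (fun r => bf w k r + w s r)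
      obtain ⟨l, hl⟩ := ih r
      refine ⟨r :: l, ?_⟩
      rw [bf_succ_eq, h, hr, hl, wcost_cons_cons]
      ring

/-- Non-negativity of every simple cycle, from non-negativity of every
permutation displacement sum. -/
lemma cycle_nonneg (w : α → α → ℝ) (hdiag : ∀ s, w s s = 0)
    (hperm : ∀ σ : Equiv.Perm α, 0 ≤ ∑ s, w s (σ s))
    (x : α) (l2 : List α) (hnd : (x :: l2).Nodup) :
    0 ≤ wcost w ((x :: l2) ++ [x]) := by
  have hlen : 0 < (x :: l2).length := by simp
  have key : ∑ s, w s ((x :: l2).formPerm s) = wcost w ((x :: l2) ++ [x]) := by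
    have h1 : ∑ s, w s ((x :: l2).formPerm s)
        = ∑ s ∈ (x :: l2).toFinset, w s ((x :: l2).formPerm s) := by
      symm
      apply Finset.sum_subset (Finset.subset_univ _)
      intro s _ hs
      rw [List.mem_toFinset] at hs
      rw [List.formPerm_apply_of_notMem hs, hdiag]
    have h2 : ∑ s ∈ (x :: l2).toFinset, w s ((x :: l2).formPerm s)
        = ((x :: l2).map (fun s => w s ((x :: l2).formPerm s))).sum :=
      List.sum_toFinset _ hnd
    have h3 : ((x :: l2).map (fun s => w s ((x :: l2).formPerm s))).sum
        = ∑ i : Fin (x :: l2).length,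
            w ((x :: l2).get i) ((x :: l2).formPerm ((x :: l2).get i)) :=
      map_sum_get _ _
    rw [h1, h2, h3, wcost_cycle w x l2]
    apply Finset.sum_congr rfl
    intro i _
    congr 1
    have hfp := List.formPerm_apply_getElem (x :: l2) hnd i.1 i.2
    simpa [List.get_eq_getElem] using hfp
  rw [← key]
  exact hperm _

lemma bf_le_wcost_all (w : α → α → ℝ) (hdiag : ∀ s, w s s = 0)
    (hperm : ∀ σ : Equiv.Perm α, 0 ≤ ∑ s, w s (σ s)) :
    ∀ (m : ℕ) (s : α) (l : List α), l.length ≤ m →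
      bf w (Fintype.card α) s ≤ wcost w (s :: l) := by
  intro m
  induction m with
  | zero =>
    intro s l hl
    have : l = [] := List.length_eq_zero_iff.mp (Nat.le_zero.mp hl)
    subst this
    exact bf_le_wcost w _ s [] (Nat.zero_le _)
  | succ m ih =>
    intro s l hl
    rcases Nat.lt_or_ge (Fintype.card α) ((s :: l).length) with hlong | hshort
    · -- a duplicate exists
      have hnodup : ¬ (s :: l).Nodup := by
        intro h
        exact absurd h.length_le_card (not_le.mpr hlong)
      obtain ⟨l1, x, l2, l3, hsplit, hnd⟩ := exists_nodup_cycle_split _ hnodup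
      have hsplit' : s :: l = l1 ++ (x :: (l2 ++ x :: l3)) := by
        rw [hsplit]; simp
      have hcost : wcost w (l1 ++ x :: l3) ≤ wcost w (s :: l) := by
        rw [hsplit', wcost_append w l1 x (l2 ++ x :: l3)]
        rw [show (x :: (l2 ++ x :: l3)) = (x :: l2) ++ (x :: l3) from by simp]
        rw [wcost_append w (x :: l2) x l3]
        have hc := cycle_nonneg w hdiag hperm x l2 hnd
        rw [wcost_append w l1 x l3]
        linarith
      cases l1 with
      | nil =>
        have hx : s = x ∧ l = l2 ++ x :: l3 := by
          have h5 : s :: l = x :: (l2 ++ x :: l3) := by simpa using hsplit'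
          simpa using h5
        obtain ⟨rfl, hleq⟩ := hx
        have hlen3 : l3.length ≤ m := by
          have := congrArg List.length hleq
          simp at this
          omega
        calc bf w (Fintype.card α) s ≤ wcost w (s :: l3) := ih s l3 hlen3
          _ ≤ wcost w (s :: l) := by simpa using hcost
      | cons a l1' =>
        have hx : a = s ∧ l = l1' ++ (x :: (l2 ++ x :: l3)) := by
          have h5 : s :: l = a :: (l1' ++ (x :: (l2 ++ x :: l3))) := by
            simpa using hsplit'
          have h6 := h5.symm
          simp only [List.cons.injEq] at h6
          exact ⟨h6.1, h6.2.symm⟩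
        obtain ⟨rfl, hleq⟩ := hx
        have hlen' : (l1' ++ x :: l3).length ≤ m := by
          have := congrArg List.length hleq
          simp at this ⊢
          omega
        calc bf w (Fintype.card α) a
            ≤ wcost w (a :: (l1' ++ x :: l3)) := ih a (l1' ++ x :: l3) hlen'
          _ = wcost w ((a :: l1') ++ x :: l3) := by simp
          _ ≤ wcost w (a :: l) := hcost
    · have hlen : l.length ≤ Fintype.card α := by
        simp at hshort
        omega
      exact bf_le_wcost w _ s l hlen

/-- Existence of a potential for a weight matrix whose permutation sums are
all non-negative. -/
lemma exists_potential (w : α → α → ℝ) (hdiag : ∀ s, w s s = 0)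
    (hperm : ∀ σ : Equiv.Perm α, 0 ≤ ∑ s, w s (σ s)) :
    ∃ p : α → ℝ, ∀ s r, p s ≤ p r + w s r := by
  refine ⟨bf w (Fintype.card α), fun s r => ?_⟩
  obtain ⟨l, hl⟩ := bf_exists_wcost w (Fintype.card α) r
  have h1 : bf w (Fintype.card α) s ≤ wcost w (s :: r :: l) :=
    bf_le_wcost_all w hdiag hperm (r :: l).length s (r :: l) le_rfl
  rw [wcost_cons_cons] at h1
  rw [hl]
  linarith

end BF

/-- Lemma B.1: under quasilinear utilities `v a r x = B a r - x`, a
permutation can be coupled with prices to form an envy-free solution iff it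
is a maximum-weight perfect matching with respect to the base values. -/
theorem quasilinear_envy_free_characterization
    (n : ℕ) (B : Fin n → Fin n → ℝ) (π : Equiv.Perm (Fin n)) :
    (∃ p : Fin n → ℝ, ∀ a r, B a r - p r ≤ B a (π a) - p (π a)) ↔
    (∀ σ : Equiv.Perm (Fin n), (∑ a, B a (σ a)) ≤ ∑ a, B a (π a)) := by
  constructor
  · rintro ⟨p, hp⟩ σ
    have h1 : ∑ a, (B a (σ a) - p (σ a)) ≤ ∑ a, (B a (π a) - p (π a)) :=
      Finset.sum_le_sum fun a _ => hp a (σ a)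
    have h2 : ∑ a, p (σ a) = ∑ a, p a := Equiv.sum_comp σ p
    have h3 : ∑ a, p (π a) = ∑ a, p a := Equiv.sum_comp π p
    rw [Finset.sum_sub_distrib, Finset.sum_sub_distrib, h2, h3] at h1
    linarith
  · intro hmax
    rcases n with _ | m
    · exact ⟨fun _ => 0, fun a => a.elim0⟩
    · set w : Fin (m+1) → Fin (m+1) → ℝ :=
        fun s r => B (π.symm s) s - B (π.symm s) r with hw
      have hdiag : ∀ s, w s s = 0 := fun s => sub_self _
      have hperm : ∀ σ : Equiv.Perm (Fin (m+1)), 0 ≤ ∑ s, w s (σ s) := by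
        intro σ
        have e1 : ∑ s, B (π.symm s) s = ∑ a, B a (π a) := by
          rw [← Equiv.sum_comp π (fun s => B (π.symm s) s)]
          simp
        have e2 : ∑ s, B (π.symm s) (σ s) = ∑ a, B a (σ (π a)) := by
          rw [← Equiv.sum_comp π (fun s => B (π.symm s) (σ s))]
          simp
        have e3 : ∑ a, B a (σ (π a)) ≤ ∑ a, B a (π a) := hmax (π.trans σ)
        have e4 : ∑ s, w s (σ s)
            = ∑ s, B (π.symm s) s - ∑ s, B (π.symm s) (σ s) := by
          rw [hw, Finset.sum_sub_distrib]
        rw [e4, e1, e2]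
        linarith
      obtain ⟨p, hpot⟩ := exists_potential w hdiag hperm
      refine ⟨p, fun a r => ?_⟩
      have h5 := hpot (π a) r
      rw [hw] at h5
      simp only [Equiv.symm_apply_apply] at h5
      linarith
end

section
/- Envy-freeness is preserved under switching to any maximum-weight matching in the quasilinear case (proved inside Lemma B.1): Let B : Fin n → Fin n → ℝ give quasilinear utilities v a r x := B a r − x, and let (π, p) be an envy-free solution. If σ is a permutation of Fin n with ∑_a B a (τ a) ≤ ∑_a B a (σ a) for every permutation τ (σ is a maximum-weight perfect matching with respect to B), then (σ, p) is also an envy-free solution, and moreover B a (σ a) − p (σ a) = B a (π a) − p (π a) for every agent a. -/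
/-- Switching to any maximum-weight matching preserves envy-freeness in the
quasilinear case (proved inside Lemma B.1), and utilities are unchanged. -/
theorem quasilinear_switch_matching
    (n : ℕ) (B : Fin n → Fin n → ℝ)
    (π : Equiv.Perm (Fin n)) (p : Fin n → ℝ)
    (hEF : ∀ a r, B a r - p r ≤ B a (π a) - p (π a))
    (σ : Equiv.Perm (Fin n))
    (hσmax : ∀ τ : Equiv.Perm (Fin n),
      (∑ a, B a (τ a)) ≤ ∑ a, B a (σ a)) :
    (∀ a r, B a r - p r ≤ B a (σ a) - p (σ a)) ∧
    (∀ a, B a (σ a) - p (σ a) = B a (π a) - p (π a)) := by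
  have hterm : ∀ a, 0 ≤ (B a (π a) - p (π a)) - (B a (σ a) - p (σ a)) := by
    intro a; linarith [hEF a (σ a)]
  have hpσ : (∑ a, p (σ a)) = ∑ a, p a := Equiv.sum_comp σ p
  have hpπ : (∑ a, p (π a)) = ∑ a, p a := Equiv.sum_comp π p
  have hsum : (∑ a, ((B a (π a) - p (π a)) - (B a (σ a) - p (σ a)))) ≤ 0 := by
    have := hσmax π
    have : (∑ a, ((B a (π a) - p (π a)) - (B a (σ a) - p (σ a))))
        = (∑ a, B a (π a)) - (∑ a, B a (σ a))
          + ((∑ a, p (σ a)) - (∑ a, p (π a))) := by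
      rw [Finset.sum_sub_distrib, Finset.sum_sub_distrib, Finset.sum_sub_distrib]
      ring
    rw [this, hpσ, hpπ]
    linarith [hσmax π]
  have heq0 : ∀ a ∈ Finset.univ, ((B a (π a) - p (π a)) - (B a (σ a) - p (σ a))) = 0 := by
    have hz : (∑ a, ((B a (π a) - p (π a)) - (B a (σ a) - p (σ a)))) = 0 :=
      le_antisymm hsum (Finset.sum_nonneg fun a _ => hterm a)
    exact (Finset.sum_eq_zero_iff_of_nonneg (fun a _ => hterm a)).mp hz
  have heq : ∀ a, B a (σ a) - p (σ a) = B a (π a) - p (π a) := by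
    intro a; have := heq0 a (Finset.mem_univ a); linarith
  exact ⟨fun a r => (heq a).symm ▸ hEF a r, heq⟩
end

section
/- Lemma B.2 (existence content for quasilinear utilities): Let B : Fin n → Fin n → ℝ give quasilinear utilities v a r x := B a r − x, and let π be any permutation of Fin n maximizing ∑_a B a (π a) over all permutations. Then there exists a price vector p : Fin n → ℝ with p r ≥ 0 for all rooms r such that (π, p) is an envy-free solution, i.e., B a (π a) − p (π a) ≥ B a r − p r for all agents a and rooms r. -/
namespace QLEF

variable {n : ℕ} (w : Fin n → Fin n → ℝ)

/-- Weight of a walk given as a list of vertices. -/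
def W : List (Fin n) → ℝ
  | [] => 0
  | [_] => 0
  | a :: b :: t => w a b + W (b :: t)

@[simp] lemma W_nil : W w [] = 0 := rfl
@[simp] lemma W_single (a : Fin n) : W w [a] = 0 := rfl
@[simp] lemma W_cons_cons (a b : Fin n) (t : List (Fin n)) :
    W w (a :: b :: t) = w a b + W w (b :: t) := rfl

lemma W_append_last (l : List (Fin n)) (h : l ≠ []) (t : Fin n) :
    W w (l ++ [t]) = W w l + w (l.getLast h) t := by
  induction l with
  | nil => simp at h
  | cons a s ih =>
    cases s with
    | nil => simp
    | cons b s' =>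
      have h2 := ih (List.cons_ne_nil b s')
      have h3 : (a :: b :: s').getLast h = (b :: s').getLast (List.cons_ne_nil b s') :=
        List.getLast_cons _
      simp only [List.cons_append] at h2 ⊢
      simp only [W_cons_cons, h2, h3]
      ring

/-- Splitting a walk at an interior vertex. -/
lemma W_split_at (x : List (Fin n)) (a : Fin n) (rest : List (Fin n)) :
    W w (x ++ a :: rest) = W w (x ++ [a]) + W w (a :: rest) := by
  induction x with
  | nil => simp
  | cons b x' ih =>
    cases x' with
    | nil => cases rest <;> simp [W]
    | cons d x'' =>
      simp only [List.cons_append, W_cons_cons] at *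
      rw [ih]; ring

lemma W_mid (u : List (Fin n)) (c d : Fin n) (z : List (Fin n)) :
    W w (c :: (u ++ d :: z)) = W w (c :: u ++ [d]) + W w (d :: z) := by
  induction u generalizing c with
  | nil => simp
  | cons b u' ih =>
    simp only [List.cons_append, W_cons_cons] at *
    rw [ih b]; ring

lemma W_splice (x : List (Fin n)) (a : Fin n) (y z : List (Fin n)) :
    W w (x ++ a :: (y ++ a :: z)) = W w (x ++ a :: z) + W w (a :: (y ++ [a])) := by
  rw [W_split_at, W_mid, W_split_at w x a z]
  have h : W w (a :: y ++ [a]) = W w (a :: (y ++ [a])) := by simp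
  rw [h]; ring

lemma exists_dup_split {l : List (Fin n)} (h : ¬ l.Nodup) :
    ∃ x a y z, l = x ++ a :: (y ++ a :: z) := by
  induction l with
  | nil => simp at h
  | cons b t ih =>
    by_cases hb : b ∈ t
    · obtain ⟨y, z, rfl⟩ := List.append_of_mem hb
      exact ⟨[], b, y, z, rfl⟩
    · have ht : ¬ t.Nodup := by
        intro hnd; exact h (List.nodup_cons.mpr ⟨hb, hnd⟩)
      obtain ⟨x, a, y, z, rfl⟩ := ih ht
      exact ⟨b :: x, a, y, z, rfl⟩

/-- The cyclic permutation along a nodup path, realizing the closed walk weight. -/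
lemma exists_perm (l : List (Fin n)) (h : l ≠ []) (hnd : l.Nodup) :
    ∃ τ : Equiv.Perm (Fin n), (∀ s, s ∉ l → τ s = s) ∧
      τ (l.getLast h) = l.head h ∧
      ∑ s ∈ l.toFinset, w s (τ s) = W w l + w (l.getLast h) (l.head h) := by
  induction l with
  | nil => simp at h
  | cons a t ih =>
    cases t with
    | nil => exact ⟨1, fun s hs => rfl, by simp, by simp⟩
    | cons b t' =>
      have hnd' : (b :: t').Nodup := (List.nodup_cons.mp hnd).2
      have ha : a ∉ (b :: t') := (List.nodup_cons.mp hnd).1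
      obtain ⟨τ', hfix', hlast', hsum'⟩ := ih (by simp) hnd'
      set L := (b :: t').getLast (by simp) with hL
      have hLmem : L ∈ (b :: t') := List.getLast_mem _
      have hhead : (b :: t').head (by simp) = b := rfl
      rw [hhead] at hlast' hsum'
      have hτ'a : τ' a = a := hfix' a ha
      refine ⟨Equiv.swap a b * τ', ?_, ?_, ?_⟩
      · intro s hs
        have hsa : s ≠ a := by intro e; exact hs (e ▸ List.mem_cons_self (a := a))
        have hst : s ∉ (b :: t') := fun e => hs (List.mem_cons_of_mem a e)
        have hsb : s ≠ b := by intro e; exact hst (e ▸ List.mem_cons_self (a := b))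
        simp [Equiv.Perm.mul_apply, hfix' s hst, Equiv.swap_apply_of_ne_of_ne hsa hsb]
      · have : (a :: b :: t').getLast (by simp) = L := by
          rw [hL, List.getLast_cons (by simp)]
        rw [this]
        simp [Equiv.Perm.mul_apply, hlast']
      · have hgl : (a :: b :: t').getLast (by simp) = L := by
          rw [hL, List.getLast_cons (by simp)]
        rw [hgl]
        have hanotT : a ∉ (b :: t').toFinset := by simpa using ha
        have htf : (a :: b :: t').toFinset = insert a (b :: t').toFinset := by
          simp [List.toFinset_cons]
        rw [htf, Finset.sum_insert hanotT]
        have hτa : (Equiv.swap a b * τ') a = b := by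
          simp [Equiv.Perm.mul_apply, hτ'a]
        have hτL : (Equiv.swap a b * τ') L = a := by
          simp [Equiv.Perm.mul_apply, hlast']
        have hLT : L ∈ (b :: t').toFinset := by simpa using hLmem
        have hsame : ∀ s ∈ (b :: t').toFinset.erase L,
            (Equiv.swap a b * τ') s = τ' s := by
          intro s hs
          obtain ⟨hsL, hsT⟩ := Finset.mem_erase.mp hs
          have hsa : s ≠ a := by
            intro e; subst e; exact ha (by simpa using hsT)
          have h1 : τ' s ≠ a := by
            intro e
            exact hsa (τ'.injective (by rw [e, hτ'a]))
          have h2 : τ' s ≠ b := by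
            intro e
            exact hsL (τ'.injective (by rw [e, hlast']))
          simp [Equiv.Perm.mul_apply, Equiv.swap_apply_of_ne_of_ne h1 h2]
        have e1 : ∑ s ∈ (b :: t').toFinset, w s ((Equiv.swap a b * τ') s)
            = w L a + ∑ s ∈ (b :: t').toFinset.erase L, w s (τ' s) := by
          rw [← Finset.add_sum_erase _ _ hLT, hτL]
          congr 1
          exact Finset.sum_congr rfl fun s hs => by rw [hsame s hs]
        have e2 : ∑ s ∈ (b :: t').toFinset, w s (τ' s)
            = w L b + ∑ s ∈ (b :: t').toFinset.erase L, w s (τ' s) := by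
          rw [← Finset.add_sum_erase _ _ hLT, hlast']
        have e3 : ∑ s ∈ (b :: t').toFinset.erase L, w s (τ' s) = W w (b :: t') := by
          have := hsum'
          rw [e2] at this
          linarith
        rw [e1, e3, hτa]
        simp only [W_cons_cons, List.head_cons]
        ring

/-- Closed walks have nonpositive weight. -/
lemma cycle_nonpos (hw0 : ∀ s, w s s = 0)
    (hcyc : ∀ τ : Equiv.Perm (Fin n), ∑ s, w s (τ s) ≤ 0) :
    ∀ N (l : List (Fin n)) (h : l ≠ []), l.length ≤ N →
      W w (l ++ [l.head h]) ≤ 0 := by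
  intro N
  induction N with
  | zero => intro l h hl; cases l <;> simp_all
  | succ N ih =>
    intro l h hl
    by_cases hnd : l.Nodup
    · obtain ⟨τ, hfix, _, hsum⟩ := exists_perm w l h hnd
      rw [W_append_last w l h, hsum.symm]
      have split : ∑ s, w s (τ s)
          = ∑ s ∈ l.toFinset, w s (τ s) + ∑ s ∈ l.toFinsetᶜ, w s (τ s) :=
        (Finset.sum_add_sum_compl l.toFinset _).symm
      have hz : ∑ s ∈ l.toFinsetᶜ, w s (τ s) = 0 := by
        apply Finset.sum_eq_zero
        intro s hs
        have : s ∉ l := by simpa using hs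
        rw [hfix s this, hw0]
      have := hcyc τ
      rw [split, hz, add_zero] at this
      exact this
    · obtain ⟨x, a, y, z, rfl⟩ := exists_dup_split hnd
      have hh : (x ++ a :: (y ++ a :: z)) ++ [(x ++ a :: (y ++ a :: z)).head h]
          = x ++ a :: (y ++ a :: (z ++ [(x ++ a :: (y ++ a :: z)).head h])) := by
        simp
      rw [hh, W_splice]
      have hcy : W w (a :: (y ++ [a])) ≤ 0 := by
        have h1 : (a :: y) ≠ [] := by simp
        have := ih (a :: y) h1 (by
          simp only [List.length_append, List.length_cons] at hl ⊢
          omega)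
        simpa using this
      have hrest : W w (x ++ a :: (z ++ [(x ++ a :: (y ++ a :: z)).head h])) ≤ 0 := by
        have hne : (x ++ a :: z) ≠ [] := by simp
        have hhead : (x ++ a :: (y ++ a :: z)).head h = (x ++ a :: z).head hne := by
          cases x <;> simp
        have hassoc : x ++ a :: (z ++ [(x ++ a :: z).head hne])
            = (x ++ a :: z) ++ [(x ++ a :: z).head hne] := by simp
        rw [hhead, hassoc]
        apply ih _ hne
        simp only [List.length_append, List.length_cons] at hl ⊢
        omega
      linarith

/-- Trivial per-edge bound. -/
lemma W_le_length (K : ℝ) (hK : ∀ a b, w a b ≤ K) (hK0 : 0 ≤ K) :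
    ∀ l : List (Fin n), W w l ≤ l.length * K := by
  intro l
  induction l with
  | nil => simp
  | cons a t ih =>
    cases t with
    | nil => simpa using hK0
    | cons b t' =>
      simp only [W_cons_cons, List.length_cons] at *
      have : W w (b :: t') ≤ (t'.length + 1) * K := by push_cast at ih ⊢; linarith
      have h1 := hK a b
      push_cast
      nlinarith

/-- All walks are bounded when there are no positive cycles. -/
lemma W_bound (hw0 : ∀ s, w s s = 0)
    (hcyc : ∀ τ : Equiv.Perm (Fin n), ∑ s, w s (τ s) ≤ 0)
    (K : ℝ) (hK : ∀ a b, w a b ≤ K) (hK0 : 0 ≤ K) :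
    ∀ N (l : List (Fin n)), l.length ≤ N → W w l ≤ n * K := by
  intro N
  induction N with
  | zero =>
    intro l hl
    have : l = [] := List.length_eq_zero_iff.mp (Nat.le_zero.mp hl)
    subst this
    simp [mul_nonneg (Nat.cast_nonneg n) hK0]
  | succ N ih =>
    intro l hl
    by_cases hnd : l.Nodup
    · have hlen : l.length ≤ n := by
        simpa using hnd.length_le_card
      calc W w l ≤ l.length * K := W_le_length w K hK hK0 l
        _ ≤ n * K := by
            apply mul_le_mul_of_nonneg_right _ hK0
            exact_mod_cast hlen
    · obtain ⟨x, a, y, z, rfl⟩ := exists_dup_split hnd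
      rw [W_splice]
      have h1 : W w (x ++ a :: z) ≤ n * K := by
        apply ih
        simp only [List.length_append, List.length_cons] at hl ⊢
        omega
      have h2 : W w (a :: (y ++ [a])) ≤ 0 := by
        have := cycle_nonpos w hw0 hcyc (y.length + 1) (a :: y) (by simp) (by simp)
        simpa using this
      linarith

end QLEF

/-- Lemma B.2 (existence content for quasilinear utilities): any
maximum-weight perfect matching admits nonnegative envy-free prices. -/
theorem quasilinear_exists_envy_free_prices
    (n : ℕ) (B : Fin n → Fin n → ℝ) (π : Equiv.Perm (Fin n))
    (hπmax : ∀ σ : Equiv.Perm (Fin n),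
      (∑ a, B a (σ a)) ≤ ∑ a, B a (π a)) :
    ∃ p : Fin n → ℝ, (∀ r, 0 ≤ p r) ∧
      ∀ a r, B a r - p r ≤ B a (π a) - p (π a) := by
  classical
  -- arbitrage weights on rooms
  set w : Fin n → Fin n → ℝ := fun s t => B (π.symm s) t - B (π.symm s) s with hw
  have hw0 : ∀ s, w s s = 0 := fun s => by simp [hw]
  have hcyc : ∀ τ : Equiv.Perm (Fin n), ∑ s, w s (τ s) ≤ 0 := by
    intro τ
    have h1 : ∑ s, B (π.symm s) (τ s) = ∑ a, B a (τ (π a)) :=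
      (Equiv.sum_comp π (fun s => B (π.symm s) (τ s))).symm.trans (by
        apply Finset.sum_congr rfl; intro a _; simp)
    have h2 : ∑ s, B (π.symm s) s = ∑ a, B a (π a) :=
      (Equiv.sum_comp π (fun s => B (π.symm s) s)).symm.trans (by
        apply Finset.sum_congr rfl; intro a _; simp)
    have h3 : ∑ a, B a (τ (π a)) ≤ ∑ a, B a (π a) := hπmax (π.trans τ)
    simp only [hw, Finset.sum_sub_distrib]
    rw [h1, h2]
    linarith
  -- bound on edge weights
  set K : ℝ := ∑ a, ∑ b, |w a b| with hKdef
  have hK0 : 0 ≤ K := Finset.sum_nonneg fun a _ =>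
    Finset.sum_nonneg fun b _ => abs_nonneg _
  have hK : ∀ a b, w a b ≤ K := by
    intro a b
    have h1 : |w a b| ≤ ∑ b', |w a b'| :=
      Finset.single_le_sum (f := fun b' => |w a b'|) (fun b' _ => abs_nonneg _)
        (Finset.mem_univ b)
    have h2 : ∑ b', |w a b'| ≤ K := by
      apply Finset.single_le_sum (f := fun a' => ∑ b', |w a' b'|)
        (fun a' _ => Finset.sum_nonneg fun b' _ => abs_nonneg _) (Finset.mem_univ a)
    exact le_trans (le_abs_self _) (le_trans h1 h2)
  -- walks ending at a given room
  set S : Fin n → Set ℝ := fun r =>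
    {x | ∃ l : List (Fin n), ∃ h : l ≠ [], l.getLast h = r ∧ QLEF.W w l = x} with hS
  have hSne : ∀ r, (S r).Nonempty := by
    intro r
    exact ⟨0, [r], by simp, by simp, rfl⟩
  have hSbdd : ∀ r, BddAbove (S r) := by
    intro r
    refine ⟨n * K, ?_⟩
    rintro x ⟨l, h, _, rfl⟩
    exact QLEF.W_bound w hw0 hcyc K hK hK0 l.length l le_rfl
  set p : Fin n → ℝ := fun r => sSup (S r) with hp
  have hp0 : ∀ r, 0 ≤ p r := by
    intro r
    apply le_csSup (hSbdd r)
    exact ⟨[r], by simp, by simp, rfl⟩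
  have hkey : ∀ s t, p s + w s t ≤ p t := by
    intro s t
    have : p s ≤ p t - w s t := by
      apply csSup_le (hSne s)
      rintro x ⟨l, h, hlast, rfl⟩
      have hmem : QLEF.W w l + w s t ∈ S t := by
        refine ⟨l ++ [t], by simp, ?_, ?_⟩
        · simp
        · rw [QLEF.W_append_last w l h, hlast]
      have := le_csSup (hSbdd t) hmem
      linarith
    linarith
  refine ⟨p, hp0, ?_⟩
  intro a r
  have h := hkey (π a) r
  have : w (π a) r = B a r - B a (π a) := by simp [hw]
  rw [this] at h
  linarith
end

section
/- Lemma C.1 (multiplicative quasilinear lemma): Let W : Fin n → Fin n → ℝ be nonnegative edge weights on the complete bipartite graph between n agents and n rooms (W a r ≥ 0 for all a, r). If there exists a permutation π of Fin n with W a (π a) > 0 for every a (a positive perfect matching), then there exist a permutation σ of Fin n and a vector d : Fin n → ℝ with d r > 0 for all r such that d (σ a) · W a (σ a) ≥ d r · W a r for all a and r. -/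
open List Finset
open scoped ENNReal

namespace MQL

variable {n : ℕ}

/-- Edge weight (in `ℝ≥0∞`) of the move from agent `a`'s assigned room to agent `b`'s
assigned room (under assignment `σ`).  When `W a (σ b) = 0` this is `⊤`. -/
noncomputable def ew (W : Fin n → Fin n → ℝ) (σ : Equiv.Perm (Fin n)) (a b : Fin n) : ℝ≥0∞ :=
  ENNReal.ofReal (W a (σ a)) / ENNReal.ofReal (W a (σ b))

/-- Weight of a walk, given as the list of visited agents. -/
noncomputable def wgt (W : Fin n → Fin n → ℝ) (σ : Equiv.Perm (Fin n)) :
    List (Fin n) → ℝ≥0∞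
  | a :: b :: t => ew W σ a b * wgt W σ (b :: t)
  | _ => 1

section Basic

variable (W : Fin n → Fin n → ℝ) (σ : Equiv.Perm (Fin n))

lemma wgt_nil : wgt W σ [] = 1 := rfl

lemma wgt_singleton (a : Fin n) : wgt W σ [a] = 1 := rfl

lemma wgt_cons_cons (a b : Fin n) (t : List (Fin n)) :
    wgt W σ (a :: b :: t) = ew W σ a b * wgt W σ (b :: t) := rfl

lemma ew_pos (hv : ∀ a, 0 < W a (σ a)) (a b : Fin n) : 0 < ew W σ a b :=
  ENNReal.div_pos (by simpa [ENNReal.ofReal_eq_zero, not_le] using hv a) ENNReal.ofReal_ne_top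

lemma wgt_pos (hv : ∀ a, 0 < W a (σ a)) : ∀ l : List (Fin n), 0 < wgt W σ l
  | [] => by simp [wgt_nil]
  | [a] => by simp [wgt_singleton]
  | a :: b :: t => by
      rw [wgt_cons_cons]
      exact ENNReal.mul_pos (ew_pos W σ hv a b).ne' (wgt_pos hv (b :: t)).ne'

lemma wgt_append : ∀ (u : List (Fin n)) (a : Fin n) (t : List (Fin n)),
    wgt W σ (u ++ a :: t) = wgt W σ (u ++ [a]) * wgt W σ (a :: t)
  | [], a, t => by simp [wgt_singleton]
  | [b], a, t => by simp [wgt_cons_cons, wgt_singleton]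
  | b :: c :: u, a, t => by
      have ih := wgt_append (c :: u) a t
      simp only [List.cons_append, wgt_cons_cons] at *
      rw [ih, mul_assoc]

lemma wgt_concat {l : List (Fin n)} {a : Fin n} (h : l.getLast? = some a) (b : Fin n) :
    wgt W σ (l ++ [b]) = wgt W σ l * ew W σ a b := by
  have e : l.dropLast ++ [a] = l := List.dropLast_append_getLast? a h
  calc wgt W σ (l ++ [b]) = wgt W σ (l.dropLast ++ a :: [b]) := by
        rw [← e]; simp
    _ = wgt W σ (l.dropLast ++ [a]) * wgt W σ [a, b] := wgt_append W σ _ a [b]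
    _ = wgt W σ l * ew W σ a b := by rw [e, wgt_cons_cons, wgt_singleton, mul_one]

lemma map_prod_getD (x0 : Fin n) (f : Fin n → ℝ≥0∞) :
    ∀ l : List (Fin n), (l.map f).prod = ∏ i ∈ Finset.range l.length, f (l.getD i x0)
  | [] => by simp
  | a :: t => by
      rw [List.map_cons, List.prod_cons, map_prod_getD x0 f t, List.length_cons,
        Finset.prod_range_succ']
      simp [mul_comm]

lemma wgt_eq_prod (x0 : Fin n) :
    ∀ l : List (Fin n),
      wgt W σ l = ∏ i ∈ Finset.range (l.length - 1),
        ew W σ (l.getD i x0) (l.getD (i + 1) x0)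
  | [] => by simp [wgt_nil]
  | [a] => by simp [wgt_singleton]
  | a :: b :: t => by
      rw [wgt_cons_cons, wgt_eq_prod x0 (b :: t)]
      have hlen : (a :: b :: t).length - 1 = (b :: t).length - 1 + 1 := by simp
      rw [hlen, Finset.prod_range_succ']
      simp [mul_comm]

end Basic

lemma split_of_not_nodup {α : Type*} :
    ∀ {l : List α}, ¬ l.Nodup → ∃ p x m s, l = p ++ x :: (m ++ x :: s)
  | [], h => absurd List.nodup_nil h
  | a :: t, h => by
      by_cases ha : a ∈ t
      · obtain ⟨m, s, rfl⟩ := List.append_of_mem ha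
        exact ⟨[], a, m, s, by simp⟩
      · have ht : ¬ t.Nodup := fun hn => h (List.nodup_cons.2 ⟨ha, hn⟩)
        obtain ⟨p, x, m, s, rfl⟩ := split_of_not_nodup ht
        exact ⟨a :: p, x, m, s, by simp⟩

section Cycle

variable {W : Fin n → Fin n → ℝ} {σ : Equiv.Perm (Fin n)}

/-- Key consequence of maximality of `σ`: along a simple cycle (nodup list `c`), the
product of the weights under the cyclically-shifted assignment is at most the product
under `σ` itself. -/
lemma nodup_cycle_prod_le (hv : ∀ a, 0 < W a (σ a))
    (hmax : ∀ τ : Equiv.Perm (Fin n), ∏ a, W a (σ (τ a)) ≤ ∏ a, W a (σ a))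
    {c : List (Fin n)} (hnd : c.Nodup) :
    ∏ a ∈ c.toFinset, W a (σ (c.formPerm a)) ≤ ∏ a ∈ c.toFinset, W a (σ a) := by
  have h := hmax c.formPerm
  rw [← Finset.prod_mul_prod_compl c.toFinset (fun a => W a (σ (c.formPerm a))),
      ← Finset.prod_mul_prod_compl c.toFinset (fun a => W a (σ a))] at h
  have hc : ∏ a ∈ c.toFinsetᶜ, W a (σ (c.formPerm a)) = ∏ a ∈ c.toFinsetᶜ, W a (σ a) := by
    refine Finset.prod_congr rfl fun a ha => ?_
    rw [List.formPerm_apply_of_notMem (by simpa using (Finset.mem_compl.1 ha))]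
  rw [hc] at h
  have hpos : 0 < ∏ a ∈ c.toFinsetᶜ, W a (σ a) :=
    Finset.prod_pos fun a _ => hv a
  exact (mul_le_mul_iff_of_pos_right hpos).1 h

/-- Every closed walk has weight at least `1`. -/
lemma cycle_ge_one (hW : ∀ a r, 0 ≤ W a r) (hv : ∀ a, 0 < W a (σ a))
    (hmax : ∀ τ : Equiv.Perm (Fin n), ∏ a, W a (σ (τ a)) ≤ ∏ a, W a (σ a)) :
    ∀ (N : ℕ) (x : Fin n) (t : List (Fin n)), t.length ≤ N →
      1 ≤ wgt W σ ((x :: t) ++ [x]) := by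
  intro N
  induction N with
  | zero =>
      intro x t ht
      have : t = [] := List.length_eq_zero_iff.1 (Nat.le_zero.1 ht)
      subst this
      have : ew W σ x x = 1 := by
        rw [ew, ENNReal.div_self (by simpa [ENNReal.ofReal_eq_zero, not_le] using hv x)
          ENNReal.ofReal_ne_top]
      simp [wgt_cons_cons, wgt_singleton, this]
  | succ N IH =>
      intro x t ht
      set c : List (Fin n) := x :: t with hc
      by_cases hnd : c.Nodup
      · -- simple cycle: use maximality
        by_cases hT : wgt W σ (c ++ [x]) = ⊤
        · rw [hT]; exact le_top
        -- index correspondence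
        set len := c.length with hlen
        have hlenpos : 0 < len := by simp [hlen, hc]
        have key1 : wgt W σ (c ++ [x]) =
            ∏ i ∈ Finset.range len, ew W σ (c.getD i x) (c.getD ((i + 1) % len) x) := by
          rw [wgt_eq_prod W σ x (c ++ [x])]
          have hl : (c ++ [x]).length - 1 = len := by simp [hlen]
          rw [hl]
          refine Finset.prod_congr rfl fun i hi => ?_
          have hi' : i < len := Finset.mem_range.1 hi
          have e1 : (c ++ [x]).getD i x = c.getD i x := List.getD_append _ _ _ _ hi'
          have e2 : (c ++ [x]).getD (i + 1) x = c.getD ((i + 1) % len) x := by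
            rcases lt_or_eq_of_le (Nat.succ_le_of_lt hi') with h2 | h2
            · rw [List.getD_append _ _ _ _ h2, Nat.mod_eq_of_lt h2]
            · have e : i + 1 = c.length := h2.trans hlen
              rw [List.getD_append_right _ _ _ _ e.ge]
              have em : (i + 1) % len = 0 := by
                rw [show i + 1 = len from h2, Nat.mod_self]
              rw [em, hc, e, Nat.sub_self]
              simp
          rw [e1, e2]
        have key2 : ∀ i, i < len → c.formPerm (c.getD i x) = c.getD ((i + 1) % len) x := by
          intro i hi
          have h1 : (i + 1) % len < len := Nat.mod_lt _ hlenpos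
          rw [List.getD_eq_getElem _ _ hi, List.getD_eq_getElem _ _ h1]
          exact List.formPerm_apply_getElem c hnd i hi
        have key3 : wgt W σ (c ++ [x]) =
            ∏ a ∈ c.toFinset, ew W σ a (c.formPerm a) := by
          rw [List.prod_toFinset _ hnd, map_prod_getD x _ c, key1]
          exact Finset.prod_congr rfl fun i hi =>
            (by rw [key2 i (Finset.mem_range.1 hi)])
        -- all denominators are positive
        have hfacne : ∀ a ∈ c.toFinset, ew W σ a (c.formPerm a) ≠ ⊤ := by
          intro a ha hcontra
          apply hT
          rw [key3, ← Finset.mul_prod_erase _ _ ha, hcontra, ENNReal.top_mul]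
          exact (CanonicallyOrderedAdd.prod_pos.2 fun b _ => ew_pos W σ hv b _).ne'
        have hden : ∀ a ∈ c.toFinset, 0 < W a (σ (c.formPerm a)) := by
          intro a ha
          have h1 := hfacne a ha
          rw [ew, Ne, ENNReal.div_eq_top] at h1
          push_neg at h1
          have h2 := h1.1 (by simpa [ENNReal.ofReal_eq_zero, not_le] using hv a)
          rcases (hW a (σ (c.formPerm a))).lt_or_eq with h | h
          · exact h
          · exact absurd (by simp [← h]) h2
        have key4 : wgt W σ (c ++ [x]) =
            ENNReal.ofReal (∏ a ∈ c.toFinset, (W a (σ a) / W a (σ (c.formPerm a)))) := by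
          rw [key3, ENNReal.ofReal_prod_of_nonneg
            (fun a ha => div_nonneg (hW a _) (hden a ha).le)]
          exact Finset.prod_congr rfl fun a ha => by
            rw [ew, ENNReal.ofReal_div_of_pos (hden a ha)]
        rw [key4, ENNReal.one_le_ofReal, Finset.prod_div_distrib]
        rw [le_div_iff₀ (Finset.prod_pos hden), one_mul]
        exact nodup_cycle_prod_le hv hmax hnd
      · -- c has a repetition: split off an inner cycle
        obtain ⟨p, x', m, s, hsplit⟩ := split_of_not_nodup hnd
        -- decompose the weight
        have e1 : wgt W σ (c ++ [x]) =
            wgt W σ (p ++ [x']) * wgt W σ (x' :: (m ++ x' :: (s ++ [x]))) := by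
          have : c ++ [x] = p ++ x' :: (m ++ x' :: (s ++ [x])) := by
            rw [hsplit]; simp
          rw [this]; exact wgt_append W σ p x' _
        have e2 : wgt W σ (x' :: (m ++ x' :: (s ++ [x]))) =
            wgt W σ ((x' :: m) ++ [x']) * wgt W σ (x' :: (s ++ [x])) := by
          have : x' :: (m ++ x' :: (s ++ [x])) = (x' :: m) ++ x' :: (s ++ [x]) := by simp
          rw [this]; exact wgt_append W σ (x' :: m) x' _
        have e3 : wgt W σ ((p ++ x' :: s) ++ [x]) =
            wgt W σ (p ++ [x']) * wgt W σ (x' :: (s ++ [x])) := by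
          have : (p ++ x' :: s) ++ [x] = p ++ x' :: (s ++ [x]) := by simp
          rw [this]; exact wgt_append W σ p x' _
        -- inner cycle weight ≥ 1
        have hm : m.length ≤ N := by
          have := congrArg List.length hsplit
          simp [hc] at this
          omega
        have hcyc : 1 ≤ wgt W σ ((x' :: m) ++ [x']) := IH x' m hm
        -- rest is a closed walk from x
        have hrest : ∃ t', (p ++ x' :: s) = x :: t' ∧ t'.length ≤ N := by
          rcases p with _ | ⟨a, p'⟩
          · have hx : x' = x := by
              have := congrArg (fun l => l.head?) hsplit
              simpa [hc] using this.symm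
            refine ⟨s, by rw [hx]; simp, ?_⟩
            have := congrArg List.length hsplit
            simp [hc] at this
            omega
          · have hx : a = x := by
              have := congrArg (fun l => l.head?) hsplit
              simpa [hc] using this.symm
            refine ⟨p' ++ x' :: s, by rw [hx]; simp, ?_⟩
            have := congrArg List.length hsplit
            simp [hc] at this
            simp only [List.length_append, List.length_cons]
            omega
        obtain ⟨t', ht', ht'len⟩ := hrest
        have hrest1 : 1 ≤ wgt W σ ((p ++ x' :: s) ++ [x]) := by
          rw [ht']; exact IH x t' ht'len
        calc (1 : ℝ≥0∞) = 1 * 1 := (one_mul 1).symm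
          _ ≤ wgt W σ ((x' :: m) ++ [x']) * wgt W σ ((p ++ x' :: s) ++ [x]) :=
              mul_le_mul' hcyc hrest1
          _ = wgt W σ (c ++ [x]) := by rw [e3, e1, e2]; ring

end Cycle

section Reduce

variable {W : Fin n → Fin n → ℝ} {σ : Equiv.Perm (Fin n)}

/-- Any walk can be replaced by a nodup walk with the same endpoint and no larger weight. -/
lemma reduce_walk (hW : ∀ a r, 0 ≤ W a r) (hv : ∀ a, 0 < W a (σ a))
    (hmax : ∀ τ : Equiv.Perm (Fin n), ∏ a, W a (σ (τ a)) ≤ ∏ a, W a (σ a)) :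
    ∀ (N : ℕ) (l : List (Fin n)), l.length ≤ N →
      ∃ l', l'.Nodup ∧ l'.getLast? = l.getLast? ∧ wgt W σ l' ≤ wgt W σ l := by
  intro N
  induction N with
  | zero =>
      intro l hl
      have : l = [] := List.length_eq_zero_iff.1 (Nat.le_zero.1 hl)
      exact ⟨l, by simp [this], rfl, le_refl _⟩
  | succ N IH =>
      intro l hl
      by_cases hnd : l.Nodup
      · exact ⟨l, hnd, rfl, le_refl _⟩
      · obtain ⟨p, x, m, s, hsplit⟩ := split_of_not_nodup hnd
        set l₂ : List (Fin n) := p ++ x :: s with hl₂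
        have e1 : wgt W σ l = wgt W σ (p ++ [x]) * wgt W σ (x :: (m ++ x :: s)) := by
          rw [hsplit]; exact wgt_append W σ p x _
        have e2 : wgt W σ (x :: (m ++ x :: s)) =
            wgt W σ ((x :: m) ++ [x]) * wgt W σ (x :: s) := by
          have : x :: (m ++ x :: s) = (x :: m) ++ x :: s := by simp
          rw [this]; exact wgt_append W σ (x :: m) x s
        have e3 : wgt W σ l₂ = wgt W σ (p ++ [x]) * wgt W σ (x :: s) :=
          wgt_append W σ p x s
        have hcyc : 1 ≤ wgt W σ ((x :: m) ++ [x]) :=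
          cycle_ge_one hW hv hmax m.length x m (le_refl _)
        have hle : wgt W σ l₂ ≤ wgt W σ l := by
          rw [e1, e2, e3]
          calc wgt W σ (p ++ [x]) * wgt W σ (x :: s)
              = 1 * (wgt W σ (p ++ [x]) * wgt W σ (x :: s)) := (one_mul _).symm
            _ ≤ wgt W σ ((x :: m) ++ [x]) * (wgt W σ (p ++ [x]) * wgt W σ (x :: s)) :=
                mul_le_mul_left hcyc _
            _ = wgt W σ (p ++ [x]) * (wgt W σ ((x :: m) ++ [x]) * wgt W σ (x :: s)) := by ring
        have hlast : l₂.getLast? = l.getLast? := by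
          rw [hsplit, hl₂, List.getLast?_append_cons, List.getLast?_append_cons]
          have : x :: (m ++ x :: s) = (x :: m) ++ x :: s := by simp
          rw [this, List.getLast?_append_cons]
        have hlen : l₂.length ≤ N := by
          have := congrArg List.length hsplit
          simp [hl₂] at this ⊢
          omega
        obtain ⟨l', h1, h2, h3⟩ := IH l₂ hlen
        exact ⟨l', h1, h2.trans hlast, h3.trans hle⟩

end Reduce

end MQL

/-- Lemma C.1 (multiplicative quasilinear lemma). -/
theorem multiplicative_quasilinear
    (n : ℕ) (W : Fin n → Fin n → ℝ)
    (hW : ∀ a r, 0 ≤ W a r)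
    (hpos : ∃ π : Equiv.Perm (Fin n), ∀ a, 0 < W a (π a)) :
    ∃ (σ : Equiv.Perm (Fin n)) (d : Fin n → ℝ),
      (∀ r, 0 < d r) ∧
      ∀ a r, d r * W a r ≤ d (σ a) * W a (σ a) := by
  classical
  obtain ⟨π, hπ⟩ := hpos
  -- choose σ maximizing the product of matched weights
  obtain ⟨σ, -, hσ⟩ := Finset.exists_max_image (Finset.univ : Finset (Equiv.Perm (Fin n)))
    (fun τ => ∏ a, W a (τ a)) Finset.univ_nonempty
  have hmax : ∀ τ : Equiv.Perm (Fin n), ∏ a, W a (σ (τ a)) ≤ ∏ a, W a (σ a) := by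
    intro τ
    have := hσ (σ * τ) (Finset.mem_univ _)
    simpa [Equiv.Perm.mul_apply] using this
  have hv : ∀ a, 0 < W a (σ a) := by
    have h0 : 0 < ∏ a, W a (π a) := Finset.prod_pos fun a _ => hπ a
    have h1 : 0 < ∏ a, W a (σ a) := lt_of_lt_of_le h0 (hσ π (Finset.mem_univ _))
    intro a
    rcases (hW a (σ a)).lt_or_eq with h | h
    · exact h
    · exact absurd (Finset.prod_eq_zero (Finset.mem_univ a) h.symm) h1.ne'
  -- the price of each agent's room: min weight of nodup walks ending at that agent
  let WalkSet : Fin n → Set ℝ≥0∞ := fun b =>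
    MQL.wgt W σ '' {l : List (Fin n) | l.Nodup ∧ l.getLast? = some b}
  have hfin : ∀ b, (WalkSet b).Finite := by
    intro b
    refine Set.Finite.image _ (Set.Finite.subset (List.finite_length_le (Fin n) n) ?_)
    intro l hl
    exact hl.1.length_le_card.trans (by simp)
  have hne : ∀ b, (WalkSet b).Nonempty := fun b =>
    ⟨MQL.wgt W σ [b], ⟨[b], ⟨List.nodup_singleton b, rfl⟩, rfl⟩⟩
  let D : Fin n → ℝ≥0∞ := fun b => sInf (WalkSet b)
  have hDmem : ∀ b, D b ∈ WalkSet b := fun b => Set.Nonempty.csInf_mem (hne b) (hfin b)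
  have hD1 : ∀ b, D b ≤ 1 := by
    intro b
    have : (1 : ℝ≥0∞) ∈ WalkSet b := ⟨[b], ⟨List.nodup_singleton b, rfl⟩, rfl⟩
    exact sInf_le this
  have hDpos : ∀ b, 0 < D b := by
    intro b
    obtain ⟨l, -, hwl⟩ := hDmem b
    rw [← hwl]
    exact MQL.wgt_pos W σ hv l
  have hDne : ∀ b, D b ≠ ⊤ := fun b => ((hD1 b).trans_lt ENNReal.one_lt_top).ne
  -- the edge inequality
  have hedge : ∀ a b, D b ≤ D a * MQL.ew W σ a b := by
    intro a b
    obtain ⟨l, ⟨hnd, hlast⟩, hwl⟩ := hDmem a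
    have hconcat : MQL.wgt W σ (l ++ [b]) = D a * MQL.ew W σ a b := by
      rw [MQL.wgt_concat W σ hlast b, hwl]
    obtain ⟨l', h1, h2, h3⟩ := MQL.reduce_walk hW hv hmax (l ++ [b]).length (l ++ [b])
      (le_refl _)
    have h2' : l'.getLast? = some b := by rw [h2]; simp
    have : MQL.wgt W σ l' ∈ WalkSet b := ⟨l', ⟨h1, h2'⟩, rfl⟩
    calc D b ≤ MQL.wgt W σ l' := sInf_le this
      _ ≤ MQL.wgt W σ (l ++ [b]) := h3
      _ = D a * MQL.ew W σ a b := hconcat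
  refine ⟨σ, fun r => (D (σ.symm r)).toReal, fun r =>
    ENNReal.toReal_pos (hDpos _).ne' (hDne _), ?_⟩
  intro a r
  have hra : σ.symm (σ a) = a := Equiv.symm_apply_apply σ a
  simp only [hra]
  set b := σ.symm r with hb
  have hr : σ b = r := Equiv.apply_symm_apply σ r
  rw [← hr]
  by_cases hz : W a (σ b) ≤ 0
  · have : W a (σ b) = 0 := le_antisymm hz (hW a (σ b))
    rw [this, mul_zero]
    exact mul_nonneg ENNReal.toReal_nonneg (hW a (σ a))
  · push_neg at hz
    have h1 : D b * ENNReal.ofReal (W a (σ b)) ≤ D a * ENNReal.ofReal (W a (σ a)) := by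
      calc D b * ENNReal.ofReal (W a (σ b))
          ≤ (D a * MQL.ew W σ a b) * ENNReal.ofReal (W a (σ b)) :=
            mul_le_mul_left (hedge a b) _
        _ = D a * (ENNReal.ofReal (W a (σ a)) / ENNReal.ofReal (W a (σ b)) *
              ENNReal.ofReal (W a (σ b))) := by rw [MQL.ew, mul_assoc]
        _ = D a * ENNReal.ofReal (W a (σ a)) := by
            rw [ENNReal.div_mul_cancel (by simpa [ENNReal.ofReal_eq_zero, not_le] using hz)
              ENNReal.ofReal_ne_top]
    have hfin2 : D a * ENNReal.ofReal (W a (σ a)) ≠ ⊤ :=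
      ENNReal.mul_ne_top (hDne a) ENNReal.ofReal_ne_top
    have h2 := ENNReal.toReal_mono hfin2 h1
    rw [ENNReal.toReal_mul, ENNReal.toReal_mul, ENNReal.toReal_ofReal (hW a (σ b)),
      ENNReal.toReal_ofReal (hW a (σ a))] at h2
    exact h2
end

section
/- Lemma 7.9 (piecewise-linear to linear reduction): Let v : Fin n → Fin n → ℝ → ℝ be utilities, and suppose there exist K ∈ ℝ and slopes λ : Fin n → Fin n → ℝ with λ a r > 0 such that v a r x = v a r K − λ a r · (x − K) for all agents a, rooms r, and all x ≥ K (each utility is affine with slope −λ a r beyond K). Let π be a permutation of Fin n and p' : Fin n → ℝ a price vector with p' r ≥ 0 for all r such that v a (π a) K − λ a (π a) · p' (π a) ≥ v a r K − λ a r · p' r for all a and r. Then the pair (π, p) with p r := p' r + K is an envy-free solution of the instance v. -/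
/-- Lemma 7.9 (piecewise-linear to linear reduction): an envy-free solution
of the linearized instance beyond the last breakpoint `K` shifts to an
envy-free solution of the original instance. -/
theorem piecewise_linear_to_linear
    (n : ℕ) (v : Fin n → Fin n → ℝ → ℝ)
    (K : ℝ) (lam : Fin n → Fin n → ℝ)
    (hlam : ∀ a r, 0 < lam a r)
    (hlin : ∀ a r x, K ≤ x → v a r x = v a r K - lam a r * (x - K))
    (π : Equiv.Perm (Fin n)) (p' : Fin n → ℝ)
    (hp' : ∀ r, 0 ≤ p' r)
    (hEF' : ∀ a r, v a r K - lam a r * p' r ≤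
      v a (π a) K - lam a (π a) * p' (π a)) :
    ∀ a r, v a r (p' r + K) ≤ v a (π a) (p' (π a) + K) := by
  intro a r
  rw [hlin a r _ (by linarith [hp' r]), hlin a (π a) _ (by linarith [hp' (π a)])]
  have := hEF' a r
  simp only [add_sub_cancel_right]
  linarith
end

section
/- Existence of envy-free solutions with nonnegative prices for linear utilities (content of the Ef-Linear totality claim, proved in the paper via a reduction to Nash equilibria of polymatrix games): Let H : Fin n → Fin n → ℝ and λ : Fin n → Fin n → ℝ with λ a r > 0 for all a, r, and define utilities v a r x := H a r − λ a r · x. Then there exist a permutation π of Fin n and a price vector p : Fin n → ℝ with p r ≥ 0 for all rooms r such that (π, p) is an envy-free solution. -/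
open Finset Filter

lemma exists_approx_ef
    (n : ℕ) (hn : 0 < n) (H lam : Fin n → Fin n → ℝ)
    (hlam : ∀ a r, 0 < lam a r) :
    ∃ M : ℝ, ∀ ε : ℝ, 0 < ε → ε ≤ 1 →
      ∃ (π : Equiv.Perm (Fin n)) (p : Fin n → ℝ),
        (∀ r, 0 ≤ p r) ∧ (∀ r, p r ≤ M) ∧
        ∀ a r, H a r - lam a r * p r ≤
          H a (π a) - lam a (π a) * p (π a) + M * ε := by
  haveI : NeZero n := ⟨hn.ne'⟩
  have hne : (Finset.univ : Finset (Fin n × Fin n)).Nonempty := Finset.univ_nonempty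
  set L : ℝ := Finset.inf' Finset.univ hne (fun q => H q.1 q.2) with hLdef
  set Lam : ℝ := Finset.sup' Finset.univ hne (fun q => lam q.1 q.2) with hLamdef
  set M0 : ℝ := Finset.sup' Finset.univ hne (fun q => (H q.1 q.2 - L) / lam q.1 q.2) with hM0def
  have hLle : ∀ a r, L ≤ H a r := fun a r =>
    Finset.inf'_le (f := fun q : Fin n × Fin n => H q.1 q.2) (Finset.mem_univ (a, r))
  have hLamge : ∀ a r, lam a r ≤ Lam := fun a r =>
    Finset.le_sup' (f := fun q : Fin n × Fin n => lam q.1 q.2) (Finset.mem_univ (a, r))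
  have hM0ge : ∀ a r, (H a r - L) / lam a r ≤ M0 := fun a r =>
    Finset.le_sup' (f := fun q : Fin n × Fin n => (H q.1 q.2 - L) / lam q.1 q.2) (Finset.mem_univ (a, r))
  have hM0nonneg : 0 ≤ M0 := by
    obtain ⟨q, -, hq⟩ := Finset.exists_mem_eq_inf' hne (fun q => H q.1 q.2)
    have h1 := hM0ge q.1 q.2
    have h2 : L = H q.1 q.2 := hq
    have h0 : (H q.1 q.2 - L) / lam q.1 q.2 = 0 := by
      rw [h2, sub_self, zero_div]
    linarith [h0 ▸ h1]
  set M : ℝ := max (M0 + 2) Lam with hMdef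
  have hM0M : M0 + 2 ≤ M := le_max_left _ _
  have hLamM : Lam ≤ M := le_max_right _ _
  refine ⟨M, ?_⟩
  intro ε hε hε1
  set B : ℕ := ⌈M0 / ε⌉₊ + 1 with hBdef
  -- the auction induction
  have key : ∀ t : ℕ, ∀ (μ : Fin n → Option (Fin n)) (c : Fin n → ℕ),
      (∀ a a' r, μ a = some r → μ a' = some r → a = a') →
      (∀ a r, μ a = some r → ∀ r',
        H a r' - lam a r' * (ε * c r') - Lam * ε ≤ H a r - lam a r * (ε * c r)) →
      (∀ r, (∀ a, μ a ≠ some r) → c r = 0) →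
      (∀ r, c r ≤ B) →
      (n * B + 1 ≤ (∑ r, c r) + t) →
      ∃ (π : Equiv.Perm (Fin n)) (p : Fin n → ℝ),
        (∀ r, 0 ≤ p r) ∧ (∀ r, p r ≤ M) ∧
        ∀ a r, H a r - lam a r * p r ≤
          H a (π a) - lam a (π a) * p (π a) + M * ε := by
    intro t
    induction t with
    | zero =>
      intro μ c _ _ _ hB hsum
      exfalso
      have : (∑ r, c r) ≤ n * B := by
        calc (∑ r, c r) ≤ ∑ _r : Fin n, B := Finset.sum_le_sum (fun r _ => hB r)
        _ = n * B := by simp [Finset.sum_const, mul_comm]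
      omega
    | succ t ih =>
      intro μ c hinj hef hzero hB hsum
      by_cases hall : ∀ a, ∃ r, μ a = some r
      · -- everyone assigned: extract the permutation
        choose f hf using hall
        have hfinj : Function.Injective f := by
          intro a a' h
          exact hinj a a' (f a) (hf a) (h ▸ hf a')
        have hfbij : Function.Bijective f := Finite.injective_iff_bijective.mp hfinj
        refine ⟨Equiv.ofBijective f hfbij, fun r => ε * c r, ?_, ?_, ?_⟩
        · intro r; positivity
        · intro r
          have h1 : (c r : ℝ) ≤ (⌈M0 / ε⌉₊ : ℝ) + 1 := by
            have h1' : c r ≤ ⌈M0 / ε⌉₊ + 1 := hB r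
            exact_mod_cast h1'
          have h3 : (⌈M0 / ε⌉₊ : ℝ) < M0 / ε + 1 := Nat.ceil_lt_add_one (by positivity)
          have h4 : ε * c r ≤ ε * (M0 / ε + 2) := by
            apply mul_le_mul_of_nonneg_left _ hε.le
            linarith
          have h5 : ε * (M0 / ε) = M0 := by
            field_simp
          have h6 : ε * (M0 / ε + 2) = M0 + 2 * ε := by
            rw [mul_add, h5]; ring
          show ε * (c r : ℝ) ≤ M
          linarith
        · intro a r
          have := hef a (f a) (hf a) r
          simp only [Equiv.ofBijective_apply]
          have hsl : Lam * ε ≤ M * ε := mul_le_mul_of_nonneg_right hLamM hε.le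
          linarith
      · -- some agent unassigned: bid step
        push_neg at hall
        obtain ⟨a, ha⟩ := hall
        have ha' : μ a = none := by
          cases h : μ a with
          | none => rfl
          | some r => exact absurd h (by simpa using ha r)
        -- there is an unassigned room
        have hroom : ∃ s, ∀ b, μ b ≠ some s := by
          by_contra hcon
          push_neg at hcon
          choose g hg using hcon
          have hginj : Function.Injective g := by
            intro s s' h
            have h2 : some s = some s' := (hg s).symm.trans (h ▸ hg s')
            exact Option.some_injective _ h2
          have hgsurj : Function.Surjective g := Finite.injective_iff_surjective.mp hginj
          obtain ⟨s, hs⟩ := hgsurj a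
          have h5 := hg s
          rw [hs] at h5
          exact (ha s) h5
        obtain ⟨s, hs⟩ := hroom
        have hcs : c s = 0 := hzero s hs
        -- best room for a at current prices
        obtain ⟨r, -, hr⟩ := Finset.exists_max_image (Finset.univ : Finset (Fin n))
          (fun r' => H a r' - lam a r' * (ε * c r')) ⟨s, Finset.mem_univ s⟩
        have hrbest : ∀ r', H a r' - lam a r' * (ε * c r') ≤ H a r - lam a r * (ε * c r) :=
          fun r' => hr r' (Finset.mem_univ r')
        have hLr : L ≤ H a r - lam a r * (ε * c r) := by
          have := hrbest s
          rw [hcs] at this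
          simp at this
          have := hLle a s
          linarith [hrbest s, hLle a s]
        have hpr : ε * c r ≤ M0 := by
          have h1 : lam a r * (ε * c r) ≤ H a r - L := by linarith
          have h2 : ε * c r ≤ (H a r - L) / lam a r := by
            rw [le_div_iff₀ (hlam a r)]; linarith [h1]
          exact h2.trans (hM0ge a r)
        have hcr : c r ≤ ⌈M0 / ε⌉₊ := by
          have h1 : (c r : ℝ) ≤ M0 / ε := by
            rw [le_div_iff₀ hε]; linarith [hpr]
          calc c r ≤ ⌈(c r : ℝ)⌉₊ := by simp
          _ ≤ ⌈M0 / ε⌉₊ := Nat.ceil_le_ceil h1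
        -- new state
        set c' : Fin n → ℕ := Function.update c r (c r + 1) with hc'def
        set μ' : Fin n → Option (Fin n) :=
          fun b => if b = a then some r else if μ b = some r then none else μ b with hμ'def
        have hc'r : c' r = c r + 1 := Function.update_self r _ c
        have hc'ne : ∀ x, x ≠ r → c' x = c x := fun x hx => Function.update_of_ne hx _ c
        have hc'ge : ∀ x, c x ≤ c' x := by
          intro x
          by_cases hx : x = r
          · subst hx; rw [hc'r]; omega
          · rw [hc'ne x hx]
        have hmono : ∀ b r', lam b r' * (ε * c r') ≤ lam b r' * (ε * c' r') := by
          intro b r'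
          apply mul_le_mul_of_nonneg_left _ (hlam b r').le
          apply mul_le_mul_of_nonneg_left _ hε.le
          exact_mod_cast hc'ge r'
        apply ih μ' c'
        · -- injectivity
          intro b b' x hb hb'
          by_cases h1 : b = a <;> by_cases h2 : b' = a
          · rw [h1, h2]
          · exfalso
            subst h1
            simp only [hμ'def, if_pos rfl] at hb
            simp only [hμ'def, if_neg h2] at hb'
            by_cases h3 : μ b' = some r
            · rw [if_pos h3] at hb'; exact nomatch hb'
            · rw [if_neg h3] at hb'
              have : x = r := by injection hb with h; exact h.symm ▸ rfl
              exact h3 (this ▸ hb')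
          · exfalso
            subst h2
            simp only [hμ'def, if_pos rfl] at hb'
            simp only [hμ'def, if_neg h1] at hb
            by_cases h3 : μ b = some r
            · rw [if_pos h3] at hb; exact nomatch hb
            · rw [if_neg h3] at hb
              have : x = r := by injection hb' with h; exact h.symm ▸ rfl
              exact h3 (this ▸ hb)
          · simp only [hμ'def, if_neg h1] at hb
            simp only [hμ'def, if_neg h2] at hb'
            by_cases h3 : μ b = some r
            · rw [if_pos h3] at hb; exact nomatch hb
            · by_cases h4 : μ b' = some r
              · rw [if_pos h4] at hb'; exact nomatch hb'
              · rw [if_neg h3] at hb; rw [if_neg h4] at hb'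
                exact hinj b b' x hb hb'
        · -- EF invariant
          intro b x hb r'
          by_cases h1 : b = a
          · simp only [hμ'def, if_pos h1] at hb
            have hx : r = x := Option.some_injective _ hb
            rw [h1, ← hx]
            have e1 : H a r' - lam a r' * (ε * c' r') ≤ H a r' - lam a r' * (ε * c r') := by
              linarith [hmono a r']
            have e2 : H a r - lam a r * (ε * c' r)
                = H a r - lam a r * (ε * c r) - lam a r * ε := by
              rw [hc'r]; push_cast; ring
            have e3 : lam a r * ε ≤ Lam * ε :=
              mul_le_mul_of_nonneg_right (hLamge a r) hε.le
            have := hrbest r'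
            rw [e2]; linarith
          · simp only [hμ'def, if_neg h1] at hb
            by_cases h3 : μ b = some r
            · rw [if_pos h3] at hb; exact nomatch hb
            · rw [if_neg h3] at hb
              have hxr : x ≠ r := fun h => h3 (h ▸ hb)
              have e0 := hef b x hb r'
              have e1 : c' x = c x := hc'ne x hxr
              rw [e1]
              linarith [hmono b r', hef b x hb r']
        · -- zero price for unassigned rooms
          intro x hx
          by_cases hxr : x = r
          · exfalso
            subst hxr
            exact hx a (by simp [hμ'def])
          · rw [hc'ne x hxr]
            apply hzero
            intro b hb
            by_cases h1 : b = a
            · subst h1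
              -- μ' a = some r ≠ some x, but here μ b = some x: need contradiction
              -- μ b = some x, b = a, but μ a = none
              rw [ha'] at hb; exact nomatch hb
            · apply hx b
              simp only [hμ'def, if_neg h1]
              by_cases h3 : μ b = some r
              · exact absurd (Option.some_injective _ (h3.symm.trans hb)) (fun h => hxr h.symm)
              · rw [if_neg h3]; exact hb
        · -- bound
          intro x
          by_cases hxr : x = r
          · subst hxr; rw [hc'r]; omega
          · rw [hc'ne x hxr]; exact hB x
        · -- measure
          have hsum' : (∑ x, c' x) = (∑ x, c x) + 1 := by
            rw [hc'def, Finset.sum_update_of_mem (Finset.mem_univ r),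
              Finset.sdiff_singleton_eq_erase,
              ← Finset.sum_erase_add Finset.univ c (Finset.mem_univ r)]
            ring
          omega
  -- start the auction
  have h0 := key (n * B + 1) (fun _ => none) (fun _ => 0)
    (fun a a' r h => nomatch h)
    (fun a r h => nomatch h)
    (fun r _ => rfl)
    (fun r => Nat.zero_le B)
    (by simp)
  exact h0

/-- Existence of envy-free solutions with nonnegative prices for linear
utilities `v a r x = H a r - λ a r · x` (totality of Ef-Linear). -/
theorem exists_envy_free_linear
    (n : ℕ) (H : Fin n → Fin n → ℝ) (lam : Fin n → Fin n → ℝ)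
    (hlam : ∀ a r, 0 < lam a r) :
    ∃ (π : Equiv.Perm (Fin n)) (p : Fin n → ℝ),
      (∀ r, 0 ≤ p r) ∧
      ∀ a r, H a r - lam a r * p r ≤
        H a (π a) - lam a (π a) * p (π a) := by
  rcases Nat.eq_zero_or_pos n with hn | hn
  · subst hn
    exact ⟨1, 0, fun r => r.elim0, fun a => a.elim0⟩
  obtain ⟨M, hM⟩ := exists_approx_ef n hn H lam hlam
  -- sequence of approximate solutions
  have hseq : ∀ k : ℕ, ∃ (π : Equiv.Perm (Fin n)) (p : Fin n → ℝ),
      (∀ r, 0 ≤ p r) ∧ (∀ r, p r ≤ M) ∧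
      ∀ a r, H a r - lam a r * p r ≤
        H a (π a) - lam a (π a) * p (π a) + M * (1 / (k + 1)) := by
    intro k
    refine hM (1 / (k + 1)) (by positivity) ?_
    rw [div_le_one (by positivity)]
    have : (0 : ℝ) ≤ (k : ℝ) := Nat.cast_nonneg k
    linarith
  choose π p hp0 hpM hef using hseq
  -- a permutation recurring infinitely often
  obtain ⟨π₀, hπ₀⟩ := Finite.exists_infinite_fiber π
  have hfreq : ∃ᶠ k in atTop, π k = π₀ := by
    rw [← Nat.cofinite_eq_atTop]
    have hinf : (π ⁻¹' {π₀}).Infinite := Set.infinite_coe_iff.mp hπ₀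
    exact (Set.infinite_iff_frequently_cofinite.mp hinf).mono (fun k hk => hk)
  obtain ⟨φ, hφmono, hφ⟩ := Filter.extraction_of_frequently_atTop hfreq
  -- compactness
  have hmem : ∀ k, p (φ k) ∈ Set.Icc (0 : Fin n → ℝ) (fun _ => M) := by
    intro k
    constructor
    · intro r; exact hp0 _ r
    · intro r; exact hpM _ r
  obtain ⟨plim, hplimmem, ψ, hψmono, hψtend⟩ :=
    (isCompact_Icc (a := (0 : Fin n → ℝ)) (b := fun _ => M)).tendsto_subseq hmem
  refine ⟨π₀, plim, fun r => hplimmem.1 r, ?_⟩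
  intro a r
  have htendcoord : ∀ x : Fin n,
      Tendsto (fun k => p (φ (ψ k)) x) atTop (nhds (plim x)) := by
    intro x
    exact (tendsto_pi_nhds.mp hψtend) x
  have hslack : Tendsto (fun k => M * (1 / ((φ (ψ k) : ℝ) + 1))) atTop (nhds 0) := by
    have h1 : Tendsto (fun k => φ (ψ k)) atTop atTop :=
      (hφmono.comp hψmono).tendsto_atTop
    have h2 : Tendsto (fun m : ℕ => 1 / ((m : ℝ) + 1)) atTop (nhds 0) :=
      tendsto_one_div_add_atTop_nhds_zero_nat
    have := (h2.comp h1).const_mul M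
    simpa using this
  have hL : Tendsto (fun k => H a r - lam a r * p (φ (ψ k)) r) atTop
      (nhds (H a r - lam a r * plim r)) :=
    tendsto_const_nhds.sub ((htendcoord r).const_mul _)
  have hR : Tendsto (fun k => H a (π₀ a) - lam a (π₀ a) * p (φ (ψ k)) (π₀ a)
      + M * (1 / ((φ (ψ k) : ℝ) + 1))) atTop
      (nhds (H a (π₀ a) - lam a (π₀ a) * plim (π₀ a))) := by
    have hR1 : Tendsto (fun k => H a (π₀ a) - lam a (π₀ a) * p (φ (ψ k)) (π₀ a)) atTop
        (nhds (H a (π₀ a) - lam a (π₀ a) * plim (π₀ a))) :=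
      tendsto_const_nhds.sub ((htendcoord (π₀ a)).const_mul _)
    simpa using hR1.add hslack
  apply le_of_tendsto_of_tendsto' hL hR
  intro k
  have h := hef (φ (ψ k)) a r
  rw [hφ (ψ k)] at h
  push_cast at h ⊢
  linarith
end
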